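/- arXiv:2502.09898 — 14 statements merged into one kernel-verified Lean document; each statement's English description precedes it below -/
import Mathlib

section
/- Let (φ_i)_{i∈I} be a finite frame for ℝ^n and let α ∈ ℝ^I be a fixed bias vector. Then the ReLU layer C_α : ℝ^n → ℝ^I, C_α(x) = (ReLU(⟨x,φ_i⟩ − α_i))_{i∈I}, is one-to-one on ℝ^n if and only if for every x ∈ ℝ^n the activated collection (φ_i)_{i∈I_α(x)} is a frame for ℝ^n (i.e., spans ℝ^n), where I_α(x) = {i ∈ I : ⟨x,φ_i⟩ ≥ α_i}. -/
open RealInnerProductSpace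

/-- A ReLU layer `C_α` associated with a finite frame `(φ_i)` for `ℝ^n`
and bias vector `α` is one-to-one if and only if for every `x` the activated
collection `(φ_i)_{i ∈ I_α(x)}` spans `ℝ^n`. -/
theorem relu_layer_injective_iff
    {n : ℕ} {ι : Type*} [Fintype ι]
    (φ : ι → EuclideanSpace ℝ (Fin n)) (α : ι → ℝ)
    (hframe : Submodule.span ℝ (Set.range φ) = ⊤) :
    Function.Injective
        (fun x : EuclideanSpace ℝ (Fin n) => fun i : ι => max 0 (⟪x, φ i⟫ - α i)) ↔
      ∀ x : EuclideanSpace ℝ (Fin n),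
        Submodule.span ℝ (φ '' {i : ι | α i ≤ ⟪x, φ i⟫}) = ⊤ := by
  classical
  constructor
  · intro hinj x
    by_contra hspan
    have hbot : (Submodule.span ℝ (φ '' {i : ι | α i ≤ ⟪x, φ i⟫}))ᗮ ≠ ⊥ := by
      intro h
      exact hspan (Submodule.orthogonal_eq_bot_iff.mp h)
    obtain ⟨u, hu, hune⟩ := Submodule.exists_mem_ne_zero_of_ne_bot hbot
    have hortho : ∀ i, α i ≤ ⟪x, φ i⟫ → ⟪u, φ i⟫ = 0 := by
      intro i hi
      have hmem : φ i ∈ Submodule.span ℝ (φ '' {i : ι | α i ≤ ⟪x, φ i⟫}) :=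
        Submodule.subset_span ⟨i, hi, rfl⟩
      have := (Submodule.mem_orthogonal _ u).mp hu _ hmem
      rwa [real_inner_comm] at this
    set f : ι → ℝ := fun i =>
      if ⟪x, φ i⟫ < α i then (α i - ⟪x, φ i⟫) / (|⟪u, φ i⟫| + 1) else 1 with hf
    set s : Finset ℝ := insert 1 (Finset.univ.image f) with hs
    have hsne : s.Nonempty := ⟨1, Finset.mem_insert_self _ _⟩
    set ε := s.min' hsne with hε
    have hεpos : 0 < ε := by
      rw [hε, Finset.lt_min'_iff]
      intro b hb
      rcases Finset.mem_insert.mp hb with h1 | h1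
      · simp [h1]
      · obtain ⟨i, _, rfl⟩ := Finset.mem_image.mp h1
        by_cases hi : ⟪x, φ i⟫ < α i
        · have h2 : (0:ℝ) < |⟪u, φ i⟫| + 1 := by positivity
          simp only [hf, if_pos hi]
          exact div_pos (by linarith) h2
        · simp only [hf]
          rw [if_neg hi]
          exact one_pos
    have heq : (fun i => max 0 (⟪x + ε • u, φ i⟫ - α i))
        = (fun i => max 0 (⟪x, φ i⟫ - α i)) := by
      funext i
      have hexp : ⟪x + ε • u, φ i⟫ = ⟪x, φ i⟫ + ε * ⟪u, φ i⟫ := by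
        rw [inner_add_left, real_inner_smul_left]
      by_cases hi : α i ≤ ⟪x, φ i⟫
      · rw [hexp, hortho i hi]; ring_nf
      · push_neg at hi
        have hfi : ε ≤ (α i - ⟪x, φ i⟫) / (|⟪u, φ i⟫| + 1) := by
          have hmem : f i ∈ s := Finset.mem_insert_of_mem (Finset.mem_image_of_mem f (Finset.mem_univ i))
          have h5 := Finset.min'_le s (f i) hmem
          simp only [hf] at h5
          rwa [if_pos hi] at h5
        have hd : (0:ℝ) < |⟪u, φ i⟫| + 1 := by positivity
        have h1 : ε * (|⟪u, φ i⟫| + 1) ≤ α i - ⟪x, φ i⟫ := by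
          rwa [← le_div_iff₀ hd]
        have h2 : ⟪u, φ i⟫ ≤ |⟪u, φ i⟫| := le_abs_self _
        have h3 : ε * ⟪u, φ i⟫ < α i - ⟪x, φ i⟫ := by nlinarith
        have h4 : ⟪x + ε • u, φ i⟫ - α i < 0 := by rw [hexp]; linarith
        rw [max_eq_left h4.le, max_eq_left (by linarith : ⟪x, φ i⟫ - α i ≤ 0)]
    have := hinj heq
    have : ε • u = 0 := by
      have h := congrArg (fun z => z - x) this
      simpa [add_sub_cancel_left] using h
    rcases smul_eq_zero.mp this with h | h
    · exact absurd h (ne_of_gt hεpos)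
    · exact hune h
  · intro hspan x y hxy
    have key : ∀ i, ⟪x, φ i⟫ = ⟪y, φ i⟫ ∨ (⟪x, φ i⟫ ≤ α i ∧ ⟪y, φ i⟫ ≤ α i) := by
      intro i
      have h := congrFun hxy i
      simp only at h
      rcases le_or_gt (⟪x, φ i⟫) (α i) with h1 | h1
      · rcases le_or_gt (⟪y, φ i⟫) (α i) with h2 | h2
        · exact Or.inr ⟨h1, h2⟩
        · exfalso
          have : max 0 (⟪x, φ i⟫ - α i) = 0 := max_eq_left (by linarith)
          rw [this] at h
          have : max 0 (⟪y, φ i⟫ - α i) = ⟪y, φ i⟫ - α i := max_eq_right (by linarith)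
          rw [this] at h; linarith
      · have hx' : max 0 (⟪x, φ i⟫ - α i) = ⟪x, φ i⟫ - α i := max_eq_right (by linarith)
        rw [hx'] at h
        rcases le_or_gt (⟪y, φ i⟫) (α i) with h2 | h2
        · have : max 0 (⟪y, φ i⟫ - α i) = 0 := max_eq_left (by linarith)
          rw [this] at h; exfalso; linarith
        · have : max 0 (⟪y, φ i⟫ - α i) = ⟪y, φ i⟫ - α i := max_eq_right (by linarith)
          rw [this] at h; left; linarith
    set m := (2:ℝ)⁻¹ • (x + y) with hm
    have hmi : ∀ i, ⟪m, φ i⟫ = (2:ℝ)⁻¹ * (⟪x, φ i⟫ + ⟪y, φ i⟫) := by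
      intro i; rw [hm, real_inner_smul_left, inner_add_left]
    have hact : ∀ i, α i ≤ ⟪m, φ i⟫ → ⟪x - y, φ i⟫ = 0 := by
      intro i hi
      rw [hmi i] at hi
      have hxy' : ⟪x, φ i⟫ = ⟪y, φ i⟫ := by
        rcases key i with h | ⟨h1, h2⟩
        · exact h
        · linarith
      rw [inner_sub_left, hxy', sub_self]
    have hsub : x - y = 0 := by
      have hmem : x - y ∈ Submodule.span ℝ (φ '' {i : ι | α i ≤ ⟪m, φ i⟫}) := by
        rw [hspan m]; trivial
      have hzero : ⟪x - y, x - y⟫ = 0 := by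
        refine Submodule.span_induction (p := fun v _ => ⟪x - y, v⟫ = 0) ?_ ?_ ?_ ?_ hmem
        · rintro v ⟨i, hi, rfl⟩
          exact hact i hi
        · exact inner_zero_right _
        · intro a b _ _ ha hb; rw [inner_add_right, ha, hb, add_zero]
        · intro c a _ ha; rw [real_inner_smul_right, ha, mul_zero]
      exact inner_self_eq_zero.mp hzero
    exact sub_eq_zero.mp hsub
end

section
/- Let (φ_i)_{i∈I} be a finite frame for ℝ^n and let λ > 0 be a fixed saturation level. Then the saturated measurement operator S_λ : B → ℝ^I, S_λ(x) = (σ_λ(⟨x,φ_i⟩))_{i∈I}, is one-to-one on the closed unit ball B of ℝ^n if and only if for every x ∈ B the unsaturated collection (φ_i)_{i∈I_λ(x)} is a frame for ℝ^n (i.e., spans ℝ^n), where I_λ(x) = {i ∈ I : |⟨x,φ_i⟩| ≤ λ}. -/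
open RealInnerProductSpace

private lemma sig_eq_self {lam a : ℝ} (h : |a| ≤ lam) :
    Real.sign a * min |a| lam = a := by
  rw [min_eq_left h]
  rcases lt_trichotomy a 0 with ha | ha | ha
  · rw [Real.sign_of_neg ha, abs_of_neg ha]; ring
  · simp [ha]
  · rw [Real.sign_of_pos ha, abs_of_pos ha]; ring

private lemma sig_inj {lam a b : ℝ} (hlam : 0 < lam) (hab : |a + b| ≤ 2 * lam)
    (h : Real.sign a * min |a| lam = Real.sign b * min |b| lam) : a = b := by
  obtain ⟨h1, h2⟩ := abs_le.mp hab
  rcases le_or_gt |a| lam with ha | ha <;> rcases le_or_gt |b| lam with hb | hb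
  · rwa [sig_eq_self ha, sig_eq_self hb] at h
  · rw [sig_eq_self ha, min_eq_right hb.le] at h
    rcases lt_trichotomy b 0 with hb0 | hb0 | hb0
    · rw [Real.sign_of_neg hb0] at h
      rw [abs_of_neg hb0] at hb
      linarith
    · rw [hb0, abs_zero] at hb; linarith
    · rw [Real.sign_of_pos hb0] at h
      rw [abs_of_pos hb0] at hb
      linarith
  · rw [sig_eq_self hb, min_eq_right ha.le] at h
    rcases lt_trichotomy a 0 with ha0 | ha0 | ha0
    · rw [Real.sign_of_neg ha0] at h
      rw [abs_of_neg ha0] at ha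
      linarith
    · rw [ha0, abs_zero] at ha; linarith
    · rw [Real.sign_of_pos ha0] at h
      rw [abs_of_pos ha0] at ha
      linarith
  · rw [min_eq_right ha.le, min_eq_right hb.le] at h
    have hs : Real.sign a = Real.sign b := mul_right_cancel₀ (ne_of_gt hlam) h
    rcases lt_trichotomy a 0 with ha0 | ha0 | ha0
    · have hsb : Real.sign b = -1 := by rw [← hs, Real.sign_of_neg ha0]
      have hb0 : b < 0 := by
        rcases lt_trichotomy b 0 with hb0 | hb0 | hb0
        · exact hb0
        · rw [hb0, Real.sign_zero] at hsb; norm_num at hsb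
        · rw [Real.sign_of_pos hb0] at hsb; norm_num at hsb
      rw [abs_of_neg ha0] at ha
      rw [abs_of_neg hb0] at hb
      linarith
    · rw [ha0, abs_zero] at ha; linarith
    · have hsb : Real.sign b = 1 := by rw [← hs, Real.sign_of_pos ha0]
      have hb0 : 0 < b := by
        rcases lt_trichotomy b 0 with hb0 | hb0 | hb0
        · rw [Real.sign_of_neg hb0] at hsb; norm_num at hsb
        · rw [hb0, Real.sign_zero] at hsb; norm_num at hsb
        · exact hb0
      rw [abs_of_pos ha0] at ha
      rw [abs_of_pos hb0] at hb
      linarith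

private lemma sig_sat {lam a v : ℝ} (hlam : 0 < lam) (h : |v - a| < |a| - lam) :
    Real.sign v * min |v| lam = Real.sign a * lam := by
  obtain ⟨h1, h2⟩ := abs_lt.mp h
  rcases lt_trichotomy a 0 with ha | ha | ha
  · rw [abs_of_neg ha] at h1 h2
    have hv : v < -lam := by linarith
    rw [Real.sign_of_neg ha, Real.sign_of_neg (by linarith : v < 0),
      min_eq_right (by rw [abs_of_neg (by linarith : v < 0)]; linarith)]
  · exfalso
    rw [ha, abs_zero] at h
    linarith [abs_nonneg (v - (0:ℝ))]
  · rw [abs_of_pos ha] at h1 h2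
    have hv : lam < v := by linarith
    rw [Real.sign_of_pos ha, Real.sign_of_pos (by linarith : 0 < v),
      min_eq_right (by rw [abs_of_pos (by linarith : 0 < v)]; linarith)]

/-- The saturated measurement operator `S_λ` associated with a finite frame
`(φ_i)` for `ℝ^n` and saturation level `λ > 0` is one-to-one on the closed unit ball
if and only if for every `x` in the ball the unsaturated collection spans `ℝ^n`. -/
theorem saturation_injective_iff
    {n : ℕ} {ι : Type*} [Fintype ι]
    (φ : ι → EuclideanSpace ℝ (Fin n)) (lam : ℝ) (hlam : 0 < lam)
    (hframe : Submodule.span ℝ (Set.range φ) = ⊤) :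
    Set.InjOn
        (fun x : EuclideanSpace ℝ (Fin n) =>
          fun i : ι => Real.sign ⟪x, φ i⟫ * min |⟪x, φ i⟫| lam)
        (Metric.closedBall (0 : EuclideanSpace ℝ (Fin n)) 1) ↔
      ∀ x ∈ Metric.closedBall (0 : EuclideanSpace ℝ (Fin n)) 1,
        Submodule.span ℝ (φ '' {i : ι | |⟪x, φ i⟫| ≤ lam}) = ⊤ := by
  constructor
  · -- injective → spans
    intro hinj x hx
    by_contra hne
    set U : Set ι := {i : ι | |⟪x, φ i⟫| ≤ lam} with hU
    set K := Submodule.span ℝ (φ '' U) with hK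
    have hKbot : Kᗮ ≠ ⊥ := fun h => hne (Submodule.orthogonal_eq_bot_iff.mp h)
    obtain ⟨u, hu, hu0⟩ := Submodule.exists_mem_ne_zero_of_ne_bot hKbot
    set w : EuclideanSpace ℝ (Fin n) := ‖u‖⁻¹ • u with hw
    have hw1 : ‖w‖ = 1 := by
      rw [hw, norm_smul, norm_inv, norm_norm, inv_mul_cancel₀ (norm_ne_zero_iff.mpr hu0)]
    have hwK : w ∈ Kᗮ := Submodule.smul_mem _ _ hu
    have hwU : ∀ i ∈ U, ⟪w, φ i⟫ = 0 := by
      intro i hi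
      have hφ : φ i ∈ K := Submodule.subset_span ⟨i, hi, rfl⟩
      rw [real_inner_comm]
      exact hwK (φ i) hφ
    have hxn : ‖x‖ ≤ 1 := by rwa [Metric.mem_closedBall, dist_zero_right] at hx
    -- eventually in ε, the two perturbed points have equal saturated measurements
    have hev : ∀ i : ι, ∀ᶠ ε in nhdsWithin (0:ℝ) (Set.Ioi 0),
        Real.sign ⟪(1-ε) • x + ε • w, φ i⟫ * min |⟪(1-ε) • x + ε • w, φ i⟫| lam =
        Real.sign ⟪(1-ε) • x - ε • w, φ i⟫ * min |⟪(1-ε) • x - ε • w, φ i⟫| lam := by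
      intro i
      by_cases hi : |⟪x, φ i⟫| ≤ lam
      · apply Filter.Eventually.of_forall
        intro ε
        rw [inner_add_left, inner_sub_left, real_inner_smul_left, real_inner_smul_left,
          hwU i hi]
        ring_nf
      · push_neg at hi
        set a := ⟪x, φ i⟫ with ha
        set b := ⟪w, φ i⟫ with hb
        have hden : (0:ℝ) < |a| + |b| + 1 := by positivity
        set c := (|a| - lam) / (|a| + |b| + 1) with hc
        have hcpos : 0 < c := div_pos (by linarith) hden
        filter_upwards [Ioo_mem_nhdsGT_of_mem (Set.left_mem_Ico.mpr hcpos)] with ε hε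
        obtain ⟨hε0, hεc⟩ := hε
        have hcd : c * (|a| + |b| + 1) = |a| - lam := div_mul_cancel₀ _ (ne_of_gt hden)
        have hbound : ε * (|a| + |b|) < |a| - lam := by
          have h1 : ε * (|a| + |b|) < ε * (|a| + |b| + 1) := by nlinarith
          have h2 : ε * (|a| + |b| + 1) < c * (|a| + |b| + 1) := by nlinarith
          linarith
        have hv1 : ⟪(1-ε) • x + ε • w, φ i⟫ = (1-ε) * a + ε * b := by
          rw [inner_add_left, real_inner_smul_left, real_inner_smul_left]
        have hv2 : ⟪(1-ε) • x - ε • w, φ i⟫ = (1-ε) * a - ε * b := by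
          rw [inner_sub_left, real_inner_smul_left, real_inner_smul_left]
        have hd1 : |((1-ε) * a + ε * b) - a| < |a| - lam := by
          have : ((1-ε) * a + ε * b) - a = ε * (b - a) := by ring
          rw [this, abs_mul, abs_of_pos hε0]
          calc ε * |b - a| ≤ ε * (|b| + |a|) := by
                have := abs_sub (b) (a)
                nlinarith [abs_sub_abs_le_abs_sub b a, abs_sub b a,
                  abs_add_le b (-a), abs_neg a]
            _ = ε * (|a| + |b|) := by ring
            _ < |a| - lam := hbound
        have hd2 : |((1-ε) * a - ε * b) - a| < |a| - lam := by
          have : ((1-ε) * a - ε * b) - a = ε * (-b - a) := by ring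
          rw [this, abs_mul, abs_of_pos hε0]
          calc ε * |-b - a| ≤ ε * (|a| + |b|) := by
                have h3 : |-b - a| ≤ |b| + |a| := by
                  calc |-b - a| ≤ |-b| + |a| := abs_sub _ _
                    _ = |b| + |a| := by rw [abs_neg]
                nlinarith
            _ < |a| - lam := hbound
        rw [hv1, hv2, sig_sat hlam hd1, sig_sat hlam hd2]
    have hev2 : ∀ᶠ ε in nhdsWithin (0:ℝ) (Set.Ioi 0),
        (∀ i : ι, Real.sign ⟪(1-ε) • x + ε • w, φ i⟫ * min |⟪(1-ε) • x + ε • w, φ i⟫| lam =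
          Real.sign ⟪(1-ε) • x - ε • w, φ i⟫ * min |⟪(1-ε) • x - ε • w, φ i⟫| lam)
        ∧ ε ∈ Set.Ioo (0:ℝ) 1 :=
      (Filter.eventually_all.mpr hev).and
        (Ioo_mem_nhdsGT_of_mem (Set.left_mem_Ico.mpr one_pos))
    obtain ⟨ε, hεP, hε0, hε1⟩ := hev2.exists
    set y₁ : EuclideanSpace ℝ (Fin n) := (1-ε) • x + ε • w with hy₁
    set y₂ : EuclideanSpace ℝ (Fin n) := (1-ε) • x - ε • w with hy₂
    have hn1 : y₁ ∈ Metric.closedBall (0 : EuclideanSpace ℝ (Fin n)) 1 := by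
      rw [Metric.mem_closedBall, dist_zero_right]
      calc ‖y₁‖ ≤ ‖(1-ε) • x‖ + ‖ε • w‖ := norm_add_le _ _
        _ = (1-ε) * ‖x‖ + ε * ‖w‖ := by
            rw [norm_smul, norm_smul, Real.norm_eq_abs, Real.norm_eq_abs,
              abs_of_pos (by linarith : (0:ℝ) < 1 - ε), abs_of_pos hε0]
        _ ≤ (1-ε) * 1 + ε * 1 := by
            rw [hw1]
            have : (0:ℝ) ≤ 1 - ε := by linarith
            nlinarith
        _ = 1 := by ring
    have hn2 : y₂ ∈ Metric.closedBall (0 : EuclideanSpace ℝ (Fin n)) 1 := by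
      rw [Metric.mem_closedBall, dist_zero_right]
      calc ‖y₂‖ ≤ ‖(1-ε) • x‖ + ‖ε • w‖ := norm_sub_le _ _
        _ = (1-ε) * ‖x‖ + ε * ‖w‖ := by
            rw [norm_smul, norm_smul, Real.norm_eq_abs, Real.norm_eq_abs,
              abs_of_pos (by linarith : (0:ℝ) < 1 - ε), abs_of_pos hε0]
        _ ≤ (1-ε) * 1 + ε * 1 := by
            rw [hw1]
            have : (0:ℝ) ≤ 1 - ε := by linarith
            nlinarith
        _ = 1 := by ring
    have heq : y₁ = y₂ := hinj hn1 hn2 (funext hεP)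
    have hsub : (2 * ε) • w = 0 := by
      have h3 : y₁ - y₂ = (2 * ε) • w := by
        rw [hy₁, hy₂]
        module
      rw [heq, sub_self] at h3
      exact h3.symm
    rcases smul_eq_zero.mp hsub with h | h
    · have : ε = 0 := by linarith [(by linarith : (0:ℝ) < 2 * ε)]
      linarith
    · rw [h, norm_zero] at hw1; norm_num at hw1
  · -- spans → injective
    intro hspan x hx y hy hxy
    have hxn : ‖x‖ ≤ 1 := by rwa [Metric.mem_closedBall, dist_zero_right] at hx
    have hyn : ‖y‖ ≤ 1 := by rwa [Metric.mem_closedBall, dist_zero_right] at hy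
    set z : EuclideanSpace ℝ (Fin n) := (1/2 : ℝ) • (x + y) with hz
    have hzb : z ∈ Metric.closedBall (0 : EuclideanSpace ℝ (Fin n)) 1 := by
      rw [Metric.mem_closedBall, dist_zero_right, hz, norm_smul, Real.norm_eq_abs]
      have := norm_add_le x y
      rw [abs_of_pos (by norm_num : (0:ℝ) < 1/2)]
      nlinarith
    have hsp := hspan z hzb
    have key : ∀ i, |⟪z, φ i⟫| ≤ lam → ⟪x - y, φ i⟫ = 0 := by
      intro i hi
      have hzin : ⟪z, φ i⟫ = (⟪x, φ i⟫ + ⟪y, φ i⟫) / 2 := by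
        rw [hz, real_inner_smul_left, inner_add_left]; ring
      have hab : |⟪x, φ i⟫ + ⟪y, φ i⟫| ≤ 2 * lam := by
        rw [hzin] at hi
        rw [abs_div] at hi
        rw [abs_of_pos (by norm_num : (0:ℝ) < 2)] at hi
        linarith
      have hxyeq : ⟪x, φ i⟫ = ⟪y, φ i⟫ := sig_inj hlam hab (congrFun hxy i)
      rw [inner_sub_left, hxyeq, sub_self]
    have hmem : x - y ∈ Submodule.span ℝ (φ '' {i : ι | |⟪z, φ i⟫| ≤ lam}) := by
      rw [hsp]; exact Submodule.mem_top
    have hinner : ⟪x - y, x - y⟫ = 0 := by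
      refine Submodule.span_induction (p := fun v _ => ⟪x - y, v⟫ = 0) ?_ ?_ ?_ ?_ hmem
      · rintro _ ⟨i, hi, rfl⟩
        exact key i hi
      · exact inner_zero_right _
      · intro v₁ v₂ _ _ h₁ h₂
        rw [inner_add_right, h₁, h₂, add_zero]
      · intro c v _ h
        rw [real_inner_smul_right, h, mul_zero]
    have : x - y = 0 := inner_self_eq_zero.mp hinner
    exact sub_eq_zero.mp this
end

section
/- Let (φ_i)_{i∈I} be a finite frame for ℝ^n and let μ > 0 be a fixed gating level. Then the gated measurement operator G_μ : {x ∈ ℝ^n : ‖x‖ ≥ 1} → ℝ^I, G_μ(x) = (γ_μ(⟨x,φ_i⟩))_{i∈I}, is one-to-one on {x ∈ ℝ^n : ‖x‖ ≥ 1} if and only if for every x with ‖x‖ ≥ 1 the gated collection (φ_i)_{i∈I_μ(x)} is a frame for ℝ^n (i.e., spans ℝ^n), where I_μ(x) = {i ∈ I : |⟨x,φ_i⟩| ≥ μ}. -/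
open RealInnerProductSpace

/-- The gated measurement operator `G_μ` associated with a finite frame
`(φ_i)` for `ℝ^n` and gating level `μ > 0` is one-to-one on `{x : ‖x‖ ≥ 1}` if and
only if for every `x` with `‖x‖ ≥ 1` the gated collection spans `ℝ^n`. -/
theorem gating_injective_iff
    {n : ℕ} {ι : Type*} [Fintype ι]
    (φ : ι → EuclideanSpace ℝ (Fin n)) (μ : ℝ) (hμ : 0 < μ)
    (hframe : Submodule.span ℝ (Set.range φ) = ⊤) :
    Set.InjOn
        (fun x : EuclideanSpace ℝ (Fin n) =>
          fun i : ι => if μ ≤ |⟪x, φ i⟫| then ⟪x, φ i⟫ else 0)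
        {x : EuclideanSpace ℝ (Fin n) | 1 ≤ ‖x‖} ↔
      ∀ x : EuclideanSpace ℝ (Fin n), 1 ≤ ‖x‖ →
        Submodule.span ℝ (φ '' {i : ι | μ ≤ |⟪x, φ i⟫|}) = ⊤ := by
  constructor
  · -- injective ⇒ spans
    intro hinj x hx
    by_contra hspan
    set K := Submodule.span ℝ (φ '' {i : ι | μ ≤ |⟪x, φ i⟫|}) with hK
    have hbot : Kᗮ ≠ ⊥ := fun h => hspan (Submodule.orthogonal_eq_bot_iff.mp h)
    obtain ⟨w, hw, hw0⟩ := Submodule.exists_mem_ne_zero_of_ne_bot hbot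
    set z : EuclideanSpace ℝ (Fin n) := if 0 ≤ ⟪x, w⟫ then w else -w with hzdef
    have hzK : z ∈ Kᗮ := by
      rw [hzdef]; split
      · exact hw
      · exact Submodule.neg_mem _ hw
    have hz0 : z ≠ 0 := by
      rw [hzdef]; split
      · exact hw0
      · simpa using hw0
    have hxz : 0 ≤ ⟪x, z⟫ := by
      rw [hzdef]; split
      · assumption
      · rw [inner_neg_right]
        have := not_le.mp (by assumption : ¬ 0 ≤ ⟪x, w⟫)
        linarith
    -- choose a small positive step t
    set f : ι → ℝ := fun i =>
      if μ ≤ |⟪x, φ i⟫| then 1 else (μ - |⟪x, φ i⟫|) / (|⟪z, φ i⟫| + 1) with hf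
    have hfpos : ∀ i, 0 < f i := by
      intro i
      by_cases hi : μ ≤ |⟪x, φ i⟫|
      · simp only [hf, if_pos hi]; norm_num
      · simp only [hf, if_neg hi]
        have h1 : 0 < μ - |⟪x, φ i⟫| := by
          have := not_le.mp hi; linarith
        have h2 : 0 < |⟪z, φ i⟫| + 1 := by positivity
        exact div_pos h1 h2
    set S : Finset ℝ := insert (1 : ℝ) (Finset.image f Finset.univ) with hS
    have hSne : S.Nonempty := ⟨1, by simp [hS]⟩
    set t : ℝ := S.min' hSne with ht
    have ht_pos : 0 < t := by
      have := S.min'_mem hSne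
      rw [← ht] at this
      rw [hS] at this
      rcases Finset.mem_insert.mp this with h | h
      · rw [h]; norm_num
      · obtain ⟨i, _, hi⟩ := Finset.mem_image.mp h
        rw [← hi]; exact hfpos i
    have ht_le : ∀ i, t ≤ f i := fun i =>
      S.min'_le (f i) (by simp [hS])
    -- orthogonality on gated indices
    have horth : ∀ i, μ ≤ |⟪x, φ i⟫| → ⟪z, φ i⟫ = 0 := by
      intro i hi
      have hmem : φ i ∈ K := by
        rw [hK]
        exact Submodule.subset_span ⟨i, hi, rfl⟩
      have := (Submodule.mem_orthogonal K z).mp hzK (φ i) hmem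
      rwa [real_inner_comm] at this
    set y : EuclideanSpace ℝ (Fin n) := x + t • z with hy
    have hyx : ∀ i, ⟪y, φ i⟫ = ⟪x, φ i⟫ + t * ⟪z, φ i⟫ := by
      intro i
      rw [hy, inner_add_left, real_inner_smul_left]
    have hynorm : 1 ≤ ‖y‖ := by
      have h1 : ‖y‖ ^ 2 = ‖x‖ ^ 2 + 2 * (t * ⟪x, z⟫) + ‖t • z‖ ^ 2 := by
        rw [hy, @norm_add_sq_real, real_inner_smul_right]
      nlinarith [norm_nonneg y, norm_nonneg (t • z), hx, mul_nonneg ht_pos.le hxz]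
    have heq : (fun i : ι => if μ ≤ |⟪y, φ i⟫| then ⟪y, φ i⟫ else 0)
        = (fun i : ι => if μ ≤ |⟪x, φ i⟫| then ⟪x, φ i⟫ else 0) := by
      funext i
      by_cases hi : μ ≤ |⟪x, φ i⟫|
      · have hz' := horth i hi
        rw [hyx i, hz']
        simp [hi]
      · have h1 : |⟪x, φ i⟫| < μ := not_le.mp hi
        have h2 : t * (|⟪z, φ i⟫| + 1) ≤ μ - |⟪x, φ i⟫| := by
          have := ht_le i
          simp only [hf, if_neg hi] at this
          have hpos : 0 < |⟪z, φ i⟫| + 1 := by positivity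
          calc t * (|⟪z, φ i⟫| + 1)
              ≤ (μ - |⟪x, φ i⟫|) / (|⟪z, φ i⟫| + 1) * (|⟪z, φ i⟫| + 1) := by
                exact mul_le_mul_of_nonneg_right this hpos.le
            _ = μ - |⟪x, φ i⟫| := div_mul_cancel₀ _ hpos.ne'
        have h3 : |⟪y, φ i⟫| < μ := by
          rw [hyx i]
          calc |⟪x, φ i⟫ + t * ⟪z, φ i⟫| ≤ |⟪x, φ i⟫| + |t * ⟪z, φ i⟫| := abs_add_le _ _
            _ = |⟪x, φ i⟫| + t * |⟪z, φ i⟫| := by rw [abs_mul, abs_of_pos ht_pos]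
            _ < μ := by nlinarith
        rw [if_neg hi, if_neg (not_le.mpr h3)]
    have : y = x := hinj hynorm hx heq
    have : t • z = 0 := by
      have := congrArg (· - x) this
      simpa [hy] using this
    rcases smul_eq_zero.mp this with h | h
    · exact ht_pos.ne' h
    · exact hz0 h
  · -- spans ⇒ injective
    intro hspan x hx y hy heq
    have key : ∀ i, μ ≤ |⟪x, φ i⟫| → ⟪x - y, φ i⟫ = 0 := by
      intro i hi
      have h := congrFun heq i
      simp only [if_pos hi] at h
      have hxne : ⟪x, φ i⟫ ≠ 0 := by
        intro h0
        rw [h0, abs_zero] at hi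
        linarith
      by_cases hiy : μ ≤ |⟪y, φ i⟫|
      · rw [if_pos hiy] at h
        rw [inner_sub_left, h, sub_self]
      · rw [if_neg hiy] at h
        exact absurd h hxne
    have hmem : ∀ v ∈ (φ '' {i : ι | μ ≤ |⟪x, φ i⟫|}), ⟪x - y, v⟫ = 0 := by
      rintro v ⟨i, hi, rfl⟩
      exact key i hi
    have hle : Submodule.span ℝ (φ '' {i : ι | μ ≤ |⟪x, φ i⟫|})
        ≤ LinearMap.ker (innerSL ℝ (x - y)).toLinearMap := by
      rw [Submodule.span_le]
      intro v hv
      exact LinearMap.mem_ker.mpr (hmem v hv)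
    rw [hspan x hx] at hle
    have : ⟪x - y, x - y⟫ = 0 := by
      exact LinearMap.mem_ker.mp (hle (Submodule.mem_top (x := x - y)))
    have := inner_self_eq_zero.mp this
    exact sub_eq_zero.mp this
end

section
/- Let (φ_i)_{i∈I} be a finite frame for ℝ^n. The following are equivalent: (i) the intensity measurement operator is one-to-one up to sign, i.e., whenever x, y ∈ ℝ^n satisfy |⟨x,φ_i⟩| = |⟨y,φ_i⟩| for all i ∈ I, then x = y or x = −y; (ii) for every subset J ⊆ I, either (φ_i)_{i∈J} or (φ_i)_{i∈I∖J} is a frame for ℝ^n; (ii*) for every pair x, y ∈ ℝ^n, either (φ_i)_{i∈I⁺(x,y)} or (φ_i)_{i∈I⁻(x,y)} is a frame for ℝ^n, where I⁺(x,y) = {i ∈ I : ⟨x,φ_i⟩⟨y,φ_i⟩ ≥ 0} and I⁻(x,y) = {i ∈ I : ⟨x,φ_i⟩⟨y,φ_i⟩ ≤ 0}. -/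
open RealInnerProductSpace

private lemma pr_aux_eq (a b : ℝ) (h : |a| = |b|) (h2 : 0 ≤ a * b) : a = b := by
  rcases abs_eq_abs.mp h with h | h
  · exact h
  · subst h
    have hb : b = 0 := by nlinarith
    simp [hb]

private lemma pr_aux_neg (a b : ℝ) (h : |a| = |b|) (h2 : a * b ≤ 0) : a = -b := by
  have := pr_aux_eq a (-b) (by simpa using h) (by nlinarith)
  simpa using this

private lemma pr_mem_orthogonal_span {n : ℕ} {ι : Type*} (φ : ι → EuclideanSpace ℝ (Fin n))
    (S : Set ι) (z : EuclideanSpace ℝ (Fin n)) (h : ∀ i ∈ S, ⟪φ i, z⟫ = 0) :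
    z ∈ (Submodule.span ℝ (φ '' S))ᗮ := by
  rw [Submodule.mem_orthogonal]
  intro u hu
  induction hu using Submodule.span_induction with
  | mem v hv =>
      obtain ⟨i, hi, rfl⟩ := hv
      exact h i hi
  | zero => simp
  | add a b _ _ ha hb => simp [inner_add_left, ha, hb]
  | smul c a _ ha => simp [inner_smul_left, ha]

/-- For a finite frame `(φ_i)` for `ℝ^n`, the following are equivalent:
(i) the intensity measurement operator is one-to-one up to sign;
(ii) the complement property: for every `J ⊆ I`, `(φ_i)_{i∈J}` or `(φ_i)_{i∈I∖J}`
spans `ℝ^n`;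
(ii*) for every pair `x, y`, `(φ_i)_{i∈I⁺(x,y)}` or `(φ_i)_{i∈I⁻(x,y)}` spans `ℝ^n`. -/
theorem phase_retrieval_injective_tfae
    {n : ℕ} {ι : Type*} [Fintype ι]
    (φ : ι → EuclideanSpace ℝ (Fin n))
    (hframe : Submodule.span ℝ (Set.range φ) = ⊤) :
    List.TFAE
      [ (∀ x y : EuclideanSpace ℝ (Fin n),
          (∀ i : ι, |⟪x, φ i⟫| = |⟪y, φ i⟫|) → x = y ∨ x = -y),
        (∀ J : Set ι,
          Submodule.span ℝ (φ '' J) = ⊤ ∨ Submodule.span ℝ (φ '' Jᶜ) = ⊤),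
        (∀ x y : EuclideanSpace ℝ (Fin n),
          Submodule.span ℝ (φ '' {i : ι | 0 ≤ ⟪x, φ i⟫ * ⟪y, φ i⟫}) = ⊤ ∨
            Submodule.span ℝ (φ '' {i : ι | ⟪x, φ i⟫ * ⟪y, φ i⟫ ≤ 0}) = ⊤) ] := by
  tfae_have 1 → 2 := by
    intro h1 J
    by_contra hcon
    push_neg at hcon
    obtain ⟨hJ, hJc⟩ := hcon
    have hu : ∃ u ∈ (Submodule.span ℝ (φ '' J))ᗮ, u ≠ 0 := by
      rw [← Submodule.ne_bot_iff, ne_eq, Submodule.orthogonal_eq_bot_iff]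
      exact hJ
    have hv : ∃ v ∈ (Submodule.span ℝ (φ '' Jᶜ))ᗮ, v ≠ 0 := by
      rw [← Submodule.ne_bot_iff, ne_eq, Submodule.orthogonal_eq_bot_iff]
      exact hJc
    obtain ⟨u, hu, hu0⟩ := hu
    obtain ⟨v, hv, hv0⟩ := hv
    have huJ : ∀ i ∈ J, ⟪u, φ i⟫ = 0 := fun i hi => by
      rw [real_inner_comm]
      exact hu _ (Submodule.subset_span ⟨i, hi, rfl⟩)
    have hvJ : ∀ i ∈ Jᶜ, ⟪v, φ i⟫ = 0 := fun i hi => by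
      rw [real_inner_comm]
      exact hv _ (Submodule.subset_span ⟨i, hi, rfl⟩)
    have habs : ∀ i : ι, |⟪u + v, φ i⟫| = |⟪u - v, φ i⟫| := by
      intro i
      by_cases hi : i ∈ J
      · rw [inner_add_left, inner_sub_left, huJ i hi]
        simp
      · rw [inner_add_left, inner_sub_left, hvJ i hi]
        simp
    rcases h1 _ _ habs with h | h
    · apply hv0
      have : v + v = 0 := by
        have h' : (u + v) - (u - v) = 0 := by rw [h]; simp
        rw [show (u + v) - (u - v) = v + v from by abel] at h'
        exact h'
      have h2 : (2 : ℝ) • v = 0 := by rw [two_smul]; exact this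
      simpa using (smul_eq_zero.mp h2).resolve_left (by norm_num)
    · apply hu0
      have : u + u = 0 := by
        have h' : (u + v) + (u - v) = 0 := by rw [h]; simp
        rw [show (u + v) + (u - v) = u + u from by abel] at h'
        exact h'
      have h2 : (2 : ℝ) • u = 0 := by rw [two_smul]; exact this
      simpa using (smul_eq_zero.mp h2).resolve_left (by norm_num)
  tfae_have 2 → 3 := by
    intro h2 x y
    rcases h2 {i : ι | 0 ≤ ⟪x, φ i⟫ * ⟪y, φ i⟫} with h | h
    · exact Or.inl h
    · right
      rw [eq_top_iff] at h ⊢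
      refine le_trans h (Submodule.span_mono (Set.image_mono ?_))
      intro i hi
      simp only [Set.mem_compl_iff, Set.mem_setOf_eq] at hi
      exact le_of_lt (lt_of_not_ge hi)
  tfae_have 3 → 1 := by
    intro h3 x y habs
    rcases h3 x y with h | h
    · left
      have hmem : x - y ∈ (Submodule.span ℝ
          (φ '' {i : ι | 0 ≤ ⟪x, φ i⟫ * ⟪y, φ i⟫}))ᗮ := by
        apply pr_mem_orthogonal_span
        intro i hi
        rw [real_inner_comm, inner_sub_left, pr_aux_eq _ _ (habs i) hi, sub_self]
      rw [h, Submodule.top_orthogonal_eq_bot, Submodule.mem_bot, sub_eq_zero] at hmem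
      exact hmem
    · right
      have hmem : x + y ∈ (Submodule.span ℝ
          (φ '' {i : ι | ⟪x, φ i⟫ * ⟪y, φ i⟫ ≤ 0}))ᗮ := by
        apply pr_mem_orthogonal_span
        intro i hi
        rw [real_inner_comm, inner_add_left, pr_aux_neg _ _ (habs i) hi, neg_add_cancel]
      rw [h, Submodule.top_orthogonal_eq_bot, Submodule.mem_bot] at hmem
      exact eq_neg_of_add_eq_zero_left hmem
  tfae_finish
end

section
/- Let (φ_i)_{i∈I} be a finite family of vectors in ℝ^n, let α ∈ ℝ^I be a bias vector, and let x, y ∈ ℝ^n. If A ≥ 0 satisfies A‖z‖² ≤ Σ_{i∈I_α((x+y)/2)} |⟨z,φ_i⟩|² for all z ∈ ℝ^n (i.e., A is a lower frame bound of the collection activated at the midpoint (x+y)/2), then (1/4)·A·‖x−y‖² ≤ ‖C_α(x) − C_α(y)‖². -/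
open RealInnerProductSpace Finset

lemma relu_midpoint_key (a b : ℝ) (hab : 0 ≤ a + b) :
    ((a - b) / 2) ^ 2 ≤ (max 0 a - max 0 b) ^ 2 := by
  rcases le_or_gt 0 a with ha | ha <;> rcases le_or_gt 0 b with hb | hb
  · rw [max_eq_right ha, max_eq_right hb]; nlinarith [sq_nonneg (a - b)]
  · rw [max_eq_right ha, max_eq_left hb.le]; nlinarith
  · rw [max_eq_left ha.le, max_eq_right hb]; nlinarith
  · linarith

/-- If `A` is a lower frame bound of the collection of frame vectors
activated at the midpoint `(x+y)/2`, then
`(1/4)·A·‖x−y‖² ≤ ‖C_α(x) − C_α(y)‖²` for the ReLU layer `C_α`. -/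
theorem relu_layer_midpoint_lower_bound
    {n : ℕ} {ι : Type*} [Fintype ι]
    (φ : ι → EuclideanSpace ℝ (Fin n)) (α : ι → ℝ)
    (C : EuclideanSpace ℝ (Fin n) → EuclideanSpace ℝ ι)
    (hC : ∀ x, C x = fun i : ι => max 0 (⟪x, φ i⟫ - α i))
    (x y : EuclideanSpace ℝ (Fin n)) (A : ℝ) (hA : 0 ≤ A)
    (hlow : ∀ z : EuclideanSpace ℝ (Fin n),
      A * ‖z‖ ^ 2 ≤
        ∑ i ∈ univ.filter (fun i : ι => α i ≤ ⟪(2 : ℝ)⁻¹ • (x + y), φ i⟫),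
          ⟪z, φ i⟫ ^ 2) :
    (1 / 4) * A * ‖x - y‖ ^ 2 ≤ ‖C x - C y‖ ^ 2 := by
  set S := univ.filter (fun i : ι => α i ≤ ⟪(2 : ℝ)⁻¹ • (x + y), φ i⟫) with hS
  have hnorm : ‖C x - C y‖ ^ 2 = ∑ i, (C x i - C y i) ^ 2 := by
    rw [EuclideanSpace.norm_eq, Real.sq_sqrt (by positivity)]
    simp [Real.norm_eq_abs, sq_abs]
  calc (1 / 4) * A * ‖x - y‖ ^ 2
      ≤ (1 / 4) * ∑ i ∈ S, ⟪x - y, φ i⟫ ^ 2 := by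
        have := hlow (x - y)
        nlinarith
    _ = ∑ i ∈ S, ((⟪x, φ i⟫ - ⟪y, φ i⟫) / 2) ^ 2 := by
        rw [mul_sum]
        refine Finset.sum_congr rfl fun i _ => ?_
        rw [inner_sub_left]; ring
    _ ≤ ∑ i ∈ S, (C x i - C y i) ^ 2 := by
        refine Finset.sum_le_sum fun i hi => ?_
        simp only [hS, mem_filter, mem_univ, true_and] at hi
        rw [inner_smul_left, inner_add_left] at hi
        simp only [RCLike.conj_to_real] at hi
        have hab : 0 ≤ (⟪x, φ i⟫ - α i) + (⟪y, φ i⟫ - α i) := by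
          have : (2:ℝ) * α i ≤ ⟪x, φ i⟫ + ⟪y, φ i⟫ := by
            nlinarith
          linarith
        have := relu_midpoint_key (⟪x, φ i⟫ - α i) (⟪y, φ i⟫ - α i) hab
        simp only [hC]
        rw [show ⟪x, φ i⟫ - ⟪y, φ i⟫ = (⟪x, φ i⟫ - α i) - (⟪y, φ i⟫ - α i) by ring]; exact this
    _ ≤ ∑ i, (C x i - C y i) ^ 2 := by
        refine Finset.sum_le_sum_of_subset_of_nonneg (Finset.subset_univ _) ?_
        intro i _ _; positivity
    _ = ‖C x - C y‖ ^ 2 := hnorm.symm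
end

section
/- Let (φ_i)_{i∈I} be a finite family of vectors in ℝ^n and let α ∈ ℝ^I be a bias vector. If A ≥ 0 satisfies A‖z‖² ≤ Σ_{i∈I_α(x)} |⟨z,φ_i⟩|² for every x ∈ ℝ^n and every z ∈ ℝ^n (i.e., A is a lower frame bound of every activated collection), then the ReLU layer C_α satisfies (1/2)·√A·‖x−y‖ ≤ ‖C_α(x) − C_α(y)‖ for all x, y ∈ ℝ^n. -/
open RealInnerProductSpace Finset

lemma relu_key (a b : ℝ) (h : 0 ≤ a + b) :
    (a - b) ^ 2 ≤ 4 * (max 0 a - max 0 b) ^ 2 := by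
  rcases le_total a 0 with ha | ha <;> rcases le_total b 0 with hb | hb
  · nlinarith
  · rw [max_eq_left ha, max_eq_right hb]; nlinarith
  · rw [max_eq_right ha, max_eq_left hb]; nlinarith
  · rw [max_eq_right ha, max_eq_right hb]; nlinarith

/-- If `A` is a lower frame bound of every activated collection
of a ReLU layer `C_α`, then `(1/2)·√A` is a lower Lipschitz bound for `C_α`. -/
theorem relu_layer_lower_lipschitz
    {n : ℕ} {ι : Type*} [Fintype ι]
    (φ : ι → EuclideanSpace ℝ (Fin n)) (α : ι → ℝ)
    (C : EuclideanSpace ℝ (Fin n) → EuclideanSpace ℝ ι)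
    (hC : ∀ x, C x = fun i : ι => max 0 (⟪x, φ i⟫ - α i))
    (A : ℝ) (hA : 0 ≤ A)
    (hlow : ∀ x z : EuclideanSpace ℝ (Fin n),
      A * ‖z‖ ^ 2 ≤ ∑ i ∈ univ.filter (fun i : ι => α i ≤ ⟪x, φ i⟫), ⟪z, φ i⟫ ^ 2) :
    ∀ x y : EuclideanSpace ℝ (Fin n),
      (1 / 2) * Real.sqrt A * ‖x - y‖ ≤ ‖C x - C y‖ := by
  intro x y
  set m : EuclideanSpace ℝ (Fin n) := (2:ℝ)⁻¹ • (x + y) with hm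
  have key : A * ‖x - y‖ ^ 2 ≤ 4 * ‖C x - C y‖ ^ 2 := by
    have h1 := hlow m (x - y)
    have h2 : ∑ i ∈ univ.filter (fun i : ι => α i ≤ ⟪m, φ i⟫), ⟪x - y, φ i⟫ ^ 2
        ≤ ∑ i : ι, 4 * ((C x - C y) i) ^ 2 := by
      have step1 : ∑ i ∈ univ.filter (fun i : ι => α i ≤ ⟪m, φ i⟫), ⟪x - y, φ i⟫ ^ 2
          ≤ ∑ i ∈ univ.filter (fun i : ι => α i ≤ ⟪m, φ i⟫), 4 * ((C x - C y) i) ^ 2 := by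
        refine Finset.sum_le_sum fun i hi => ?_
        rcases mem_filter.mp hi with ⟨_, hiα⟩
        have hm' : ⟪m, φ i⟫ = (2:ℝ)⁻¹ * (⟪x, φ i⟫ + ⟪y, φ i⟫) := by
          rw [hm, real_inner_smul_left, inner_add_left]
        have hsum : 0 ≤ (⟪x, φ i⟫ - α i) + (⟪y, φ i⟫ - α i) := by
          rw [hm'] at hiα; linarith
        have := relu_key (⟪x, φ i⟫ - α i) (⟪y, φ i⟫ - α i) hsum
        have hxy : ⟪x - y, φ i⟫ = (⟪x, φ i⟫ - α i) - (⟪y, φ i⟫ - α i) := by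
          rw [inner_sub_left]; ring
        have hCi : (C x - C y) i = max 0 (⟪x, φ i⟫ - α i) - max 0 (⟪y, φ i⟫ - α i) := by
          simp [hC x, hC y]
        rw [hxy, hCi]
        linarith
      refine step1.trans (Finset.sum_le_sum_of_subset_of_nonneg (fun i _ => mem_univ i) ?_)
      intro i _ _; positivity
    have h3 : ∑ i : ι, ((C x - C y) i) ^ 2 = ‖C x - C y‖ ^ 2 := by
      rw [EuclideanSpace.norm_eq, Real.sq_sqrt (by positivity)]
      simp [Real.norm_eq_abs, sq_abs]
    rw [← Finset.mul_sum] at h2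
    linarith
  have hz : 0 ≤ ‖C x - C y‖ := norm_nonneg _
  have hs : Real.sqrt A * ‖x - y‖ ≤ 2 * ‖C x - C y‖ := by
    have h4 := Real.sqrt_le_sqrt key
    rwa [Real.sqrt_mul hA, Real.sqrt_sq (norm_nonneg _),
      show (4:ℝ) = 2 ^ 2 by norm_num, Real.sqrt_mul (by positivity),
      Real.sqrt_sq (by norm_num : (0:ℝ) ≤ 2), Real.sqrt_sq hz] at h4
  linarith
end

section
/- Let (φ_i)_{i∈I} be a finite frame for ℝ^n and let α ∈ ℝ^I be a bias vector such that the ReLU layer C_α is one-to-one. If κ ≥ 0 satisfies κ‖x−y‖ ≤ ‖C_α(x) − C_α(y)‖ for all x, y ∈ ℝ^n (i.e., κ is a lower Lipschitz bound for C_α), then for every x ∈ ℝ^n and every z ∈ ℝ^n one has κ²‖z‖² ≤ Σ_{i∈I_α(x)} |⟨z,φ_i⟩|²; that is, κ² is a lower frame bound of every activated collection. -/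
open RealInnerProductSpace Finset

/-- If `κ` is a lower Lipschitz bound for an injective ReLU layer `C_α`
associated with a finite frame, then `κ²` is a lower frame bound of every activated
collection `(φ_i)_{i ∈ I_α(x)}`. -/
theorem relu_layer_lower_lipschitz_gives_frame_bound
    {n : ℕ} {ι : Type*} [Fintype ι]
    (φ : ι → EuclideanSpace ℝ (Fin n)) (α : ι → ℝ)
    (hframe : Submodule.span ℝ (Set.range φ) = ⊤)
    (C : EuclideanSpace ℝ (Fin n) → EuclideanSpace ℝ ι)
    (hC : ∀ x, C x = fun i : ι => max 0 (⟪x, φ i⟫ - α i))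
    (hinj : Function.Injective C)
    (κ : ℝ) (hκ : 0 ≤ κ)
    (hlip : ∀ x y : EuclideanSpace ℝ (Fin n), κ * ‖x - y‖ ≤ ‖C x - C y‖) :
    ∀ x z : EuclideanSpace ℝ (Fin n),
      κ ^ 2 * ‖z‖ ^ 2 ≤ ∑ i ∈ univ.filter (fun i : ι => α i ≤ ⟪x, φ i⟫), ⟪z, φ i⟫ ^ 2 := by
  intro x z
  classical
  set a : ι → ℝ := fun i => ⟪x, φ i⟫ - α i with ha
  set b : ι → ℝ := fun i => ⟪z, φ i⟫ with hb
  have hev : ∀ᶠ t : ℝ in nhdsWithin 0 (Set.Ioi 0),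
      ∀ i, a i < 0 → a i + t * b i < 0 := by
    rw [Filter.eventually_all]
    intro i
    by_cases hi : a i < 0
    · have hcont : Continuous fun t : ℝ => a i + t * b i := by continuity
      have hc : Filter.Tendsto (fun t : ℝ => a i + t * b i) (nhds 0) (nhds (a i)) := by
        simpa using hcont.tendsto 0
      have := hc.eventually (eventually_lt_nhds hi)
      exact (this.filter_mono nhdsWithin_le_nhds).mono (fun t h _ => h)
    · exact Filter.Eventually.of_forall fun t h => absurd h hi
  obtain ⟨t, htpos, ht⟩ := (eventually_mem_nhdsWithin.and hev).exists
  rw [Set.mem_Ioi] at htpos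
  have key := hlip (x + t • z) x
  have h1 : ‖x + t • z - x‖ = t * ‖z‖ := by
    have hx : x + t • z - x = t • z := by abel
    rw [hx, norm_smul, Real.norm_eq_abs, abs_of_pos htpos]
  have hco : ∀ i, (C (x + t • z) - C x) i = max 0 (a i + t * b i) - max 0 (a i) := by
    intro i
    have : ⟪x + t • z, φ i⟫ = ⟪x, φ i⟫ + t * ⟪z, φ i⟫ := by
      rw [inner_add_left, real_inner_smul_left]
    simp only [PiLp.sub_apply, hC, ha, hb, this]
    ring_nf
  have h2 : ‖C (x + t • z) - C x‖ ^ 2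
      = ∑ i, (max 0 (a i + t * b i) - max 0 (a i)) ^ 2 := by
    rw [EuclideanSpace.norm_eq, Real.sq_sqrt (by positivity)]
    exact Finset.sum_congr rfl fun i _ => by rw [hco i, Real.norm_eq_abs, sq_abs]
  have h3 : ∑ i, (max 0 (a i + t * b i) - max 0 (a i)) ^ 2
      ≤ t ^ 2 * ∑ i ∈ univ.filter (fun i : ι => α i ≤ ⟪x, φ i⟫), ⟪z, φ i⟫ ^ 2 := by
    rw [Finset.mul_sum,
      ← Finset.sum_filter_add_sum_filter_not univ (fun i : ι => α i ≤ ⟪x, φ i⟫)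
        (fun i => (max 0 (a i + t * b i) - max 0 (a i)) ^ 2)]
    have hz : ∑ i ∈ univ.filter (fun i : ι => ¬ α i ≤ ⟪x, φ i⟫),
        (max 0 (a i + t * b i) - max 0 (a i)) ^ 2 = 0 := by
      apply Finset.sum_eq_zero
      intro i hi
      rw [Finset.mem_filter] at hi
      have hai : a i < 0 := by
        have := hi.2
        simp only [ha]
        linarith [lt_of_not_ge this]
      have h1' : max 0 (a i + t * b i) = 0 := max_eq_left (le_of_lt (ht i hai))
      have h2' : max 0 (a i) = 0 := max_eq_left (le_of_lt hai)
      rw [h1', h2']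
      ring
    rw [hz, add_zero]
    apply Finset.sum_le_sum
    intro i _
    have habs : |max 0 (a i + t * b i) - max 0 (a i)| ≤ |t * b i| := by
      have := abs_max_sub_max_le_abs (a i + t * b i) (a i) 0
      rw [max_comm (a i + t * b i) 0, max_comm (a i) 0] at this
      simpa using this
    calc (max 0 (a i + t * b i) - max 0 (a i)) ^ 2
        = |max 0 (a i + t * b i) - max 0 (a i)| ^ 2 := (sq_abs _).symm
      _ ≤ |t * b i| ^ 2 := by
          apply pow_le_pow_left₀ (abs_nonneg _) habs
      _ = t ^ 2 * ⟪z, φ i⟫ ^ 2 := by rw [sq_abs]; simp only [hb]; ring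
  have hchain : t ^ 2 * (κ ^ 2 * ‖z‖ ^ 2)
      ≤ t ^ 2 * ∑ i ∈ univ.filter (fun i : ι => α i ≤ ⟪x, φ i⟫), ⟪z, φ i⟫ ^ 2 := by
    calc t ^ 2 * (κ ^ 2 * ‖z‖ ^ 2) = (κ * (t * ‖z‖)) ^ 2 := by ring
      _ = (κ * ‖x + t • z - x‖) ^ 2 := by rw [h1]
      _ ≤ ‖C (x + t • z) - C x‖ ^ 2 := by
          apply pow_le_pow_left₀ (by positivity) key
      _ = _ := h2
      _ ≤ _ := h3
  exact le_of_mul_le_mul_left hchain (by positivity)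
end

section
/- Let (φ_i)_{i∈I} be a finite frame for ℝ^n. Then the ReLU layer with zero bias associated with the symmetrized family (φ_i)_{i∈I} ∪ (−φ_i)_{i∈I}, i.e., the map x ↦ (ReLU(⟨x,φ_i⟩))_{i∈I} ⊕ (ReLU(⟨x,−φ_i⟩))_{i∈I} from ℝ^n to ℝ^I × ℝ^I, is one-to-one on ℝ^n. -/
open RealInnerProductSpace

/-- For a finite frame `(φ_i)` for `ℝ^n`, the ReLU layer with zero bias
associated with the symmetrized family `(φ_i) ∪ (−φ_i)` is one-to-one on `ℝ^n`. -/
theorem relu_layer_symmetrized_injective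
    {n : ℕ} {ι : Type*} [Fintype ι]
    (φ : ι → EuclideanSpace ℝ (Fin n))
    (hframe : Submodule.span ℝ (Set.range φ) = ⊤) :
    Function.Injective
      (fun x : EuclideanSpace ℝ (Fin n) =>
        ((fun i : ι => max 0 ⟪x, φ i⟫), (fun i : ι => max 0 ⟪x, -φ i⟫))) := by
  intro x y h
  simp only [Prod.mk.injEq, funext_iff] at h
  have key : ∀ i, ⟪x, φ i⟫ = ⟪y, φ i⟫ := by
    intro i
    have h1 := h.1 i
    have h2 := h.2 i
    simp only [inner_neg_right] at h2
    have e : ∀ a : ℝ, max 0 a - max 0 (-a) = a := fun a => by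
      simp only [max_def]; split_ifs <;> linarith
    have := congrArg₂ (· - ·) h1 h2
    simpa [e] using this
  have hz : ∀ i, ⟪x - y, φ i⟫ = 0 := by
    intro i; rw [inner_sub_left, key i, sub_self]
  have hmem : x - y ∈ (Submodule.span ℝ (Set.range φ))ᗮ := by
    rw [Submodule.mem_orthogonal]
    intro v hv
    induction hv using Submodule.span_induction with
    | mem v hv => obtain ⟨i, rfl⟩ := hv; rw [real_inner_comm]; exact hz i
    | zero => simp
    | add a b _ _ ha hb => rw [inner_add_left, ha, hb, add_zero]
    | smul c a _ ha => rw [real_inner_smul_left, ha, mul_zero]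
  rw [hframe, Submodule.top_orthogonal_eq_bot, Submodule.mem_bot, sub_eq_zero] at hmem
  exact hmem
end

section
/- Let (φ_i)_{i∈I} be a finite family of vectors in ℝ^n and let (ψ_j)_{j∈J} denote the symmetrized family (φ_i)_{i∈I} ∪ (−φ_i)_{i∈I}. Fix the zero bias and for x ∈ ℝ^n let I_0(x) = {j ∈ J : ⟨x,ψ_j⟩ ≥ 0} be the activated index set. Then: (a) if A ≥ 0 satisfies A‖z‖² ≤ Σ_{i∈I}|⟨z,φ_i⟩|² for all z ∈ ℝ^n, then for every x ∈ ℝ^n and every z ∈ ℝ^n one has A‖z‖² ≤ Σ_{j∈I_0(x)}|⟨z,ψ_j⟩|²; (b) if x ∈ ℝ^n satisfies ⟨x,φ_i⟩ ≠ 0 for all i ∈ I, then Σ_{j∈I_0(x)}|⟨z,ψ_j⟩|² = Σ_{i∈I}|⟨z,φ_i⟩|² for every z ∈ ℝ^n. In particular, the optimal lower frame bound A_0 = min_x over the activated collections of the symmetrized family equals the optimal lower frame bound A of (φ_i)_{i∈I}. -/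
open RealInnerProductSpace Finset

/-- For the symmetrized family `ψ = (φ_i) ∪ (−φ_i)` with zero bias:
(a) a lower frame bound `A` of `(φ_i)` is a lower frame bound of every activated
collection `(ψ_j)_{j ∈ I_0(x)}`;
(b) if `⟨x,φ_i⟩ ≠ 0` for all `i`, then the activated collection at `x` has the same
sums of squared frame coefficients as `(φ_i)` itself. -/
theorem symmetrized_activated_frame_bounds
    {n : ℕ} {ι : Type*} [Fintype ι]
    (φ : ι → EuclideanSpace ℝ (Fin n))
    (ψ : ι ⊕ ι → EuclideanSpace ℝ (Fin n))
    (hψ : ψ = Sum.elim φ (fun i => -φ i)) :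
    ((∀ A : ℝ, 0 ≤ A →
        (∀ z : EuclideanSpace ℝ (Fin n), A * ‖z‖ ^ 2 ≤ ∑ i : ι, ⟪z, φ i⟫ ^ 2) →
        ∀ x z : EuclideanSpace ℝ (Fin n),
          A * ‖z‖ ^ 2 ≤
            ∑ j ∈ univ.filter (fun j : ι ⊕ ι => 0 ≤ ⟪x, ψ j⟫), ⟪z, ψ j⟫ ^ 2) ∧
      (∀ x : EuclideanSpace ℝ (Fin n), (∀ i : ι, ⟪x, φ i⟫ ≠ 0) →
        ∀ z : EuclideanSpace ℝ (Fin n),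
          ∑ j ∈ univ.filter (fun j : ι ⊕ ι => 0 ≤ ⟪x, ψ j⟫), ⟪z, ψ j⟫ ^ 2 =
            ∑ i : ι, ⟪z, φ i⟫ ^ 2)) := by
  subst hψ
  have key : ∀ x z : EuclideanSpace ℝ (Fin n),
      (∑ j ∈ univ.filter (fun j : ι ⊕ ι =>
          0 ≤ ⟪x, Sum.elim φ (fun i => -φ i) j⟫), ⟪z, Sum.elim φ (fun i => -φ i) j⟫ ^ 2) =
      ∑ i : ι, ((if 0 ≤ ⟪x, φ i⟫ then ⟪z, φ i⟫ ^ 2 else 0) +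
        (if 0 ≤ -⟪x, φ i⟫ then ⟪z, φ i⟫ ^ 2 else 0)) := by
    intro x z
    rw [sum_filter, Fintype.sum_sum_type, ← Finset.sum_add_distrib]
    simp [inner_neg_right, neg_sq]
    exact Finset.sum_congr rfl fun i _ => by split_ifs with h <;> simp [h]
  constructor
  · intro A hA hframe x z
    rw [key]
    refine le_trans (hframe z) (Finset.sum_le_sum fun i _ => ?_)
    rcases le_or_gt 0 (⟪x, φ i⟫ : ℝ) with h | h
    · rw [if_pos h]
      have : (0:ℝ) ≤ if 0 ≤ -⟪x, φ i⟫ then ⟪z, φ i⟫ ^ 2 else 0 := by positivity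
      linarith
    · rw [if_neg (not_le.mpr h), if_pos (by linarith)]
      linarith
  · intro x hx z
    rw [key]
    refine Finset.sum_congr rfl fun i _ => ?_
    rcases (hx i).lt_or_gt with h | h
    · rw [if_neg (not_le.mpr h), if_pos (by linarith)]; ring
    · rw [if_pos h.le, if_neg (not_le.mpr (neg_neg_of_pos h))]; ring
end

section
/- Let (φ_i)_{i∈I} be a finite family of vectors in ℝ^n and let C denote the ReLU layer with zero bias associated with the symmetrized family (φ_i)_{i∈I} ∪ (−φ_i)_{i∈I}, i.e., C(x) = (ReLU(⟨x,φ_i⟩))_{i∈I} ⊕ (ReLU(−⟨x,φ_i⟩))_{i∈I}. If A ≥ 0 satisfies A‖z‖² ≤ Σ_{i∈I}|⟨z,φ_i⟩|² for all z ∈ ℝ^n, then for all x, y ∈ ℝ^n one has (1/2)·A·‖x−y‖² ≤ ‖C(x) − C(y)‖². -/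
open RealInnerProductSpace

lemma relu_pair_bound (a b : ℝ) :
    (1 / 2) * (a - b) ^ 2 ≤ (max 0 a - max 0 b) ^ 2 + (max 0 (-a) - max 0 (-b)) ^ 2 := by
  rcases le_total a 0 with ha | ha <;> rcases le_total b 0 with hb | hb <;>
    simp [max_eq_left, max_eq_right, ha, hb, neg_nonneg.mpr, neg_nonpos.mpr] <;> nlinarith [sq_nonneg (a+b), sq_nonneg (a-b)]

/-- If `A` is a lower frame bound of `(φ_i)`, then the ReLU layer `C`
with zero bias of the symmetrized family `(φ_i) ∪ (−φ_i)` satisfies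
`(1/2)·A·‖x−y‖² ≤ ‖C(x) − C(y)‖²`. -/
theorem symmetrized_relu_lower_bound
    {n : ℕ} {ι : Type*} [Fintype ι]
    (φ : ι → EuclideanSpace ℝ (Fin n))
    (C : EuclideanSpace ℝ (Fin n) → EuclideanSpace ℝ (ι ⊕ ι))
    (hC : ∀ x, C x = Sum.elim (fun i : ι => max 0 ⟪x, φ i⟫) (fun i : ι => max 0 (-⟪x, φ i⟫)))
    (A : ℝ) (hA : 0 ≤ A)
    (hlow : ∀ z : EuclideanSpace ℝ (Fin n), A * ‖z‖ ^ 2 ≤ ∑ i : ι, ⟪z, φ i⟫ ^ 2) :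
    ∀ x y : EuclideanSpace ℝ (Fin n),
      (1 / 2) * A * ‖x - y‖ ^ 2 ≤ ‖C x - C y‖ ^ 2 := by
  intro x y
  have hnorm : ‖C x - C y‖ ^ 2 = ∑ j : ι ⊕ ι, ((C x - C y) j) ^ 2 := by
    rw [EuclideanSpace.norm_eq, Real.sq_sqrt (by positivity)]
    simp [sq_abs]
  rw [hnorm]
  have hsub : ∀ j, (C x - C y) j = C x j - C y j := fun j => rfl
  have key : ∑ i : ι, (1 / 2) * ⟪x - y, φ i⟫ ^ 2 ≤ ∑ j : ι ⊕ ι, ((C x - C y) j) ^ 2 := by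
    rw [Fintype.sum_sum_type]
    rw [← Finset.sum_add_distrib]
    apply Finset.sum_le_sum
    intro i _
    simp only [hsub, hC, Sum.elim_inl, Sum.elim_inr]
    have h := relu_pair_bound ⟪x, φ i⟫ ⟪y, φ i⟫
    have hd : ⟪x - y, φ i⟫ = ⟪x, φ i⟫ - ⟪y, φ i⟫ := inner_sub_left _ _ _
    rw [hd]
    exact h
  refine le_trans ?_ key
  rw [← Finset.mul_sum]
  have := hlow (x - y)
  nlinarith [this]
end

section
/- Let (φ_i)_{i∈I} be a finite family of vectors in ℝ^n, let λ > 0, and let x, y lie in the closed unit ball B of ℝ^n. Let I_λ^Δ(x,y) = {i ∈ I : ⟨x,φ_i⟩ > λ and ⟨y,φ_i⟩ < −λ} ∪ {i ∈ I : ⟨x,φ_i⟩ < −λ and ⟨y,φ_i⟩ > λ}. If A ≥ 0 satisfies A‖z‖² ≤ Σ_{i ∈ I_λ((x+y)/2) ∖ I_λ^Δ(x,y)} |⟨z,φ_i⟩|² for all z ∈ ℝ^n, then ((1/4)·A + |I_λ^Δ(x,y)|·λ²)·‖x−y‖² ≤ ‖S_λ(x) − S_λ(y)‖². -/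
open RealInnerProductSpace Finset

lemma clamp_eq_sat (lam : ℝ) (h : 0 < lam) (t : ℝ) :
    Real.sign t * min |t| lam = max (-lam) (min t lam) := by
  rcases lt_trichotomy t 0 with ht | rfl | ht
  · rw [Real.sign_of_neg ht, abs_of_neg ht]
    rcases le_total (-t) lam with h1 | h1
    · rw [min_eq_left h1, min_eq_left (by linarith : t ≤ lam),
        max_eq_right (by linarith : -lam ≤ t)]; ring
    · rw [min_eq_right h1, min_eq_left (by linarith : t ≤ lam),
        max_eq_left (by linarith : t ≤ -lam)]; ring
  · simp [Real.sign_zero, min_eq_left h.le, max_eq_right (neg_nonpos.mpr h.le)]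
  · rw [Real.sign_of_pos ht, abs_of_pos ht, one_mul,
      max_eq_right (le_min (by linarith) (by linarith))]

lemma clamp_key (lam a b : ℝ) (h : 0 < lam)
    (hm1 : -lam ≤ (a + b) / 2) (hm2 : (a + b) / 2 ≤ lam)
    (hnd : ¬((lam < a ∧ b < -lam) ∨ (a < -lam ∧ lam < b))) :
    ((a - b) / 2) ^ 2 ≤ (max (-lam) (min a lam) - max (-lam) (min b lam)) ^ 2 := by
  push_neg at hnd
  obtain ⟨hnd1, hnd2⟩ := hnd
  rcases le_or_gt a lam with ha1 | ha1
  · rcases le_or_gt (-lam) a with ha2 | ha2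
    · rw [min_eq_left ha1, max_eq_right ha2]
      rcases le_or_gt b lam with hb1 | hb1
      · rcases le_or_gt (-lam) b with hb2 | hb2
        · rw [min_eq_left hb1, max_eq_right hb2]; nlinarith [sq_nonneg (a - b)]
        · rw [min_eq_left (by linarith : b ≤ lam), max_eq_left (by linarith : b ≤ -lam)]
          nlinarith [mul_nonneg (by linarith : (0:ℝ) ≤ (a + b)/2 + lam)
            (by linarith : (0:ℝ) ≤ a + lam - (a - b)/2)]
      · rw [min_eq_right hb1.le, max_eq_right (by linarith : -lam ≤ lam)]
        nlinarith [mul_nonneg (by linarith : (0:ℝ) ≤ lam - (a + b)/2)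
          (by linarith : (0:ℝ) ≤ lam - a + (b - a)/2)]
    · rw [min_eq_left ha1, max_eq_left ha2.le]
      have hble : b ≤ lam := hnd2 ha2
      rcases le_or_gt (-lam) b with hb2 | hb2
      · rw [min_eq_left hble, max_eq_right hb2]
        nlinarith [mul_nonneg (by linarith : (0:ℝ) ≤ (a + b)/2 + lam)
          (by linarith : (0:ℝ) ≤ b + lam - (b - a)/2)]
      · linarith
  · rw [min_eq_right ha1.le, max_eq_right (by linarith : -lam ≤ lam)]
    have hbge : -lam ≤ b := hnd1 ha1
    rcases le_or_gt b lam with hb1 | hb1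
    · rw [min_eq_left hb1, max_eq_right hbge]
      nlinarith [mul_nonneg (by linarith : (0:ℝ) ≤ lam - (a + b)/2)
        (by linarith : (0:ℝ) ≤ lam - b + (a - b)/2)]
    · linarith

/-- Midpoint lower bound for the saturated measurement operator:
if `A` is a lower frame bound of the collection indexed by
`I_λ((x+y)/2) ∖ I_λ^Δ(x,y)`, then
`((1/4)·A + |I_λ^Δ(x,y)|·λ²)·‖x−y‖² ≤ ‖S_λ(x) − S_λ(y)‖²`. -/
theorem saturation_midpoint_lower_bound
    {n : ℕ} {ι : Type*} [Fintype ι] [DecidableEq ι]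
    (φ : ι → EuclideanSpace ℝ (Fin n)) (lam : ℝ) (hlam : 0 < lam)
    (S : EuclideanSpace ℝ (Fin n) → EuclideanSpace ℝ ι)
    (hS : ∀ x, S x = fun i : ι => Real.sign ⟪x, φ i⟫ * min |⟪x, φ i⟫| lam)
    (x y : EuclideanSpace ℝ (Fin n))
    (hx : x ∈ Metric.closedBall (0 : EuclideanSpace ℝ (Fin n)) 1)
    (hy : y ∈ Metric.closedBall (0 : EuclideanSpace ℝ (Fin n)) 1)
    (Δ : Finset ι)
    (hΔ : Δ = univ.filter (fun i : ι =>
      (lam < ⟪x, φ i⟫ ∧ ⟪y, φ i⟫ < -lam) ∨ (⟪x, φ i⟫ < -lam ∧ lam < ⟪y, φ i⟫)))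
    (A : ℝ) (hA : 0 ≤ A)
    (hlow : ∀ z : EuclideanSpace ℝ (Fin n),
      A * ‖z‖ ^ 2 ≤
        ∑ i ∈ (univ.filter (fun i : ι => |⟪(2 : ℝ)⁻¹ • (x + y), φ i⟫| ≤ lam)) \ Δ,
          ⟪z, φ i⟫ ^ 2) :
    ((1 / 4) * A + (Δ.card : ℝ) * lam ^ 2) * ‖x - y‖ ^ 2 ≤ ‖S x - S y‖ ^ 2 := by
  have hSx : ∀ i, S x i = max (-lam) (min ⟪x, φ i⟫ lam) := by
    intro i; rw [hS]; exact clamp_eq_sat lam hlam _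
  have hSy : ∀ i, S y i = max (-lam) (min ⟪y, φ i⟫ lam) := by
    intro i; rw [hS]; exact clamp_eq_sat lam hlam _
  have hnorm2 : ‖S x - S y‖ ^ 2 = ∑ i, (S x i - S y i) ^ 2 := by
    rw [EuclideanSpace.norm_eq, Real.sq_sqrt (by positivity)]
    simp [sq_abs]
  set J : Finset ι :=
    (univ.filter (fun i : ι => |⟪(2 : ℝ)⁻¹ • (x + y), φ i⟫| ≤ lam)) \ Δ with hJ
  have hsplit : ∑ i ∈ J, (S x i - S y i) ^ 2 + ∑ i ∈ Δ, (S x i - S y i) ^ 2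
      ≤ ∑ i, (S x i - S y i) ^ 2 := by
    rw [← Finset.sum_union sdiff_disjoint]
    exact Finset.sum_le_sum_of_subset_of_nonneg (Finset.subset_univ _)
      (fun i _ _ => sq_nonneg _)
  have hΔsum : ∑ i ∈ Δ, (S x i - S y i) ^ 2 = (Δ.card : ℝ) * (4 * lam ^ 2) := by
    rw [Finset.sum_congr rfl (fun i hi => ?_), Finset.sum_const, nsmul_eq_mul]
    rw [hΔ, Finset.mem_filter] at hi
    rcases hi.2 with ⟨h1, h2⟩ | ⟨h1, h2⟩
    · rw [hSx, hSy, min_eq_right h1.le, max_eq_right (by linarith : -lam ≤ lam),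
        min_eq_left (by linarith : ⟪y, φ i⟫ ≤ lam),
        max_eq_left h2.le]
      ring
    · rw [hSx, hSy, min_eq_left (by linarith : ⟪x, φ i⟫ ≤ lam), max_eq_left h1.le,
        min_eq_right h2.le, max_eq_right (by linarith : -lam ≤ lam)]
      ring
  have hJsum : (1 / 4) * (A * ‖x - y‖ ^ 2) ≤ ∑ i ∈ J, (S x i - S y i) ^ 2 := by
    calc (1 / 4) * (A * ‖x - y‖ ^ 2)
        ≤ (1 / 4) * ∑ i ∈ J, ⟪x - y, φ i⟫ ^ 2 := by
          have := hlow (x - y); linarith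
      _ = ∑ i ∈ J, ((⟪x, φ i⟫ - ⟪y, φ i⟫) / 2) ^ 2 := by
          rw [Finset.mul_sum]
          exact Finset.sum_congr rfl (fun i _ => by rw [inner_sub_left]; ring)
      _ ≤ ∑ i ∈ J, (S x i - S y i) ^ 2 := by
          apply Finset.sum_le_sum
          intro i hi
          rw [hJ, Finset.mem_sdiff, Finset.mem_filter] at hi
          obtain ⟨⟨-, hmid⟩, hnΔ⟩ := hi
          have hmid' : |(⟪x, φ i⟫ + ⟪y, φ i⟫) / 2| ≤ lam := by
            have heq : ⟪(2 : ℝ)⁻¹ • (x + y), φ i⟫ = (⟪x, φ i⟫ + ⟪y, φ i⟫) / 2 := by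
              rw [real_inner_smul_left, inner_add_left]; ring
            rwa [heq] at hmid
          rw [abs_le] at hmid'
          rw [hSx, hSy]
          exact clamp_key lam _ _ hlam hmid'.1 hmid'.2
            (fun hc => hnΔ (by rw [hΔ]; exact Finset.mem_filter.mpr ⟨Finset.mem_univ i, hc⟩))
  have hxy4 : ‖x - y‖ ^ 2 ≤ 4 := by
    have h1 : ‖x‖ ≤ 1 := mem_closedBall_zero_iff.mp hx
    have h2 : ‖y‖ ≤ 1 := mem_closedBall_zero_iff.mp hy
    have h3 : ‖x - y‖ ≤ 2 := (norm_sub_le x y).trans (by linarith)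
    nlinarith [norm_nonneg (x - y)]
  rw [hnorm2]
  have hcard : (0 : ℝ) ≤ (Δ.card : ℝ) := Nat.cast_nonneg _
  nlinarith [hsplit, hΔsum, hJsum,
    mul_nonneg (mul_nonneg hcard (sq_nonneg lam)) (by linarith : (0:ℝ) ≤ 4 - ‖x - y‖ ^ 2)]
end

section
/- Let (φ_i)_{i∈I} be a finite family of vectors in ℝ^n and let λ > 0. If A ≥ 0 satisfies A‖z‖² ≤ Σ_{i∈I_λ(x)} |⟨z,φ_i⟩|² for every x in the closed unit ball B of ℝ^n and every z ∈ ℝ^n (i.e., A is a lower frame bound of every unsaturated collection), then for all x, y ∈ B one has min{(1/2)·√A, λ}·‖x−y‖ ≤ ‖S_λ(x) − S_λ(y)‖. -/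
open RealInnerProductSpace Finset


lemma sat_eq_clamp (lam t : ℝ) (hlam : 0 < lam) :
    Real.sign t * min |t| lam = max (-lam) (min t lam) := by
  rcases lt_trichotomy t 0 with h | h | h
  · rw [Real.sign_of_neg h, abs_of_neg h, min_eq_left (by linarith : t ≤ lam)]
    rcases le_total (-t) lam with h' | h'
    · rw [min_eq_left h', max_eq_right (by linarith)]; ring
    · rw [min_eq_right h', max_eq_left (by linarith)]; ring
  · simp [h, min_eq_left hlam.le, max_eq_right hlam.le, hlam.le]
  · rw [Real.sign_of_pos h, abs_of_pos h, one_mul,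
      max_eq_right (le_min (by linarith) (by linarith))]

lemma clamp_half (lam s t : ℝ) (hst : s ≤ t) (hmid1 : -(2*lam) ≤ s + t)
    (hmid2 : s + t ≤ 2*lam) (h : lam < t → -lam ≤ s) :
    (t - s) / 2 ≤ max (-lam) (min t lam) - max (-lam) (min s lam) := by
  rcases le_or_gt t lam with h1 | h1
  · rw [min_eq_left h1, min_eq_left (hst.trans h1)]
    rcases le_or_gt (-lam) s with h2 | h2
    · rw [max_eq_right h2, max_eq_right (by linarith : -lam ≤ t)]; linarith
    · rw [max_eq_left h2.le]
      rcases le_or_gt (-lam) t with h4 | h4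
      · rw [max_eq_right h4]; linarith
      · rw [max_eq_left h4.le]; linarith
  · have h2 := h h1
    rw [min_eq_right h1.le, max_eq_right (by linarith : -lam ≤ lam)]
    rcases le_or_gt s lam with h3 | h3
    · rw [min_eq_left h3, max_eq_right h2]; linarith
    · rw [min_eq_right h3.le, max_eq_right (by linarith : -lam ≤ lam)]; linarith

lemma clamp_lower (lam s t : ℝ) (hmid : |s + t| ≤ 2 * lam)
    (h1 : ¬(lam < s ∧ t < -lam)) (h2 : ¬(lam < t ∧ s < -lam)) :
    |s - t| / 2 ≤ |max (-lam) (min s lam) - max (-lam) (min t lam)| := by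
  rw [abs_le] at hmid
  rcases le_total s t with h | h
  · have key := clamp_half lam s t h (by linarith) hmid.2 (fun hl => by
      by_contra hc; push_neg at hc; exact h2 ⟨hl, by linarith⟩)
    have e : |s - t| = t - s := by rw [abs_sub_comm, abs_of_nonneg (by linarith)]
    rw [e, abs_sub_comm]
    exact key.trans (le_abs_self _)
  · have key := clamp_half lam t s h (by linarith) (by linarith) (fun hl => by
      by_contra hc; push_neg at hc; exact h1 ⟨hl, by linarith⟩)
    rw [abs_of_nonneg (by linarith)]
    exact key.trans (le_abs_self _)

lemma eucl_norm_sq {ι : Type*} [Fintype ι] (v : EuclideanSpace ℝ ι) :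
    ‖v‖ ^ 2 = ∑ i, (v i) ^ 2 := by
  rw [EuclideanSpace.norm_eq, Real.sq_sqrt (by positivity)]
  simp [sq_abs]

/-- If `A` is a lower frame bound of every unsaturated collection
on the closed unit ball, then `min{(1/2)·√A, λ}` is a lower Lipschitz bound for
the saturated measurement operator `S_λ` on the ball. -/
theorem saturation_lower_lipschitz
    {n : ℕ} {ι : Type*} [Fintype ι]
    (φ : ι → EuclideanSpace ℝ (Fin n)) (lam : ℝ) (hlam : 0 < lam)
    (S : EuclideanSpace ℝ (Fin n) → EuclideanSpace ℝ ι)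
    (hS : ∀ x, S x = fun i : ι => Real.sign ⟪x, φ i⟫ * min |⟪x, φ i⟫| lam)
    (A : ℝ) (hA : 0 ≤ A)
    (hlow : ∀ x ∈ Metric.closedBall (0 : EuclideanSpace ℝ (Fin n)) 1,
      ∀ z : EuclideanSpace ℝ (Fin n),
        A * ‖z‖ ^ 2 ≤ ∑ i ∈ univ.filter (fun i : ι => |⟪x, φ i⟫| ≤ lam), ⟪z, φ i⟫ ^ 2) :
    ∀ x ∈ Metric.closedBall (0 : EuclideanSpace ℝ (Fin n)) 1,
      ∀ y ∈ Metric.closedBall (0 : EuclideanSpace ℝ (Fin n)) 1,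
        min ((1 / 2) * Real.sqrt A) lam * ‖x - y‖ ≤ ‖S x - S y‖ := by
  intro x hx y hy
  rw [Metric.mem_closedBall, dist_zero_right] at hx hy
  have hxy2 : ‖x - y‖ ≤ 2 := by
    calc ‖x - y‖ ≤ ‖x‖ + ‖y‖ := norm_sub_le x y
    _ ≤ 2 := by linarith
  -- components of S x - S y
  have hcomp : ∀ i, (S x - S y) i =
      max (-lam) (min ⟪x, φ i⟫ lam) - max (-lam) (min ⟪y, φ i⟫ lam) := by
    intro i
    have : (S x - S y) i = S x i - S y i := rfl
    rw [this, hS x, hS y]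
    simp only
    rw [sat_eq_clamp lam _ hlam, sat_eq_clamp lam _ hlam]
  have hnormsq : ‖S x - S y‖ ^ 2 = ∑ i, ((S x - S y) i) ^ 2 := eucl_norm_sq _
  by_cases hcase : ∃ i, (lam < ⟪x, φ i⟫ ∧ ⟪y, φ i⟫ < -lam) ∨
      (lam < ⟪y, φ i⟫ ∧ ⟪x, φ i⟫ < -lam)
  · -- opposite saturation: a coordinate difference equals 2λ
    obtain ⟨i, hi⟩ := hcase
    have habs : |(S x - S y) i| = 2 * lam := by
      rw [hcomp i]
      rcases hi with ⟨h1, h2⟩ | ⟨h1, h2⟩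
      · rw [min_eq_right h1.le, max_eq_right (by linarith : -lam ≤ lam),
          min_eq_left (by linarith : ⟪y, φ i⟫ ≤ lam), max_eq_left h2.le]
        rw [abs_of_nonneg (by linarith)]; ring
      · rw [min_eq_right h1.le, max_eq_right (by linarith : -lam ≤ lam),
          min_eq_left (by linarith : ⟪x, φ i⟫ ≤ lam), max_eq_left h2.le]
        rw [abs_of_nonpos (by linarith)]; ring
    have hsingle : (2 * lam) ^ 2 ≤ ‖S x - S y‖ ^ 2 := by
      rw [hnormsq, ← habs, sq_abs]
      exact Finset.single_le_sum (f := fun i => ((S x - S y) i) ^ 2)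
        (fun j _ => sq_nonneg _) (mem_univ i)
    have h2lam : 2 * lam ≤ ‖S x - S y‖ := by
      have := Real.sqrt_le_sqrt hsingle
      rwa [Real.sqrt_sq (by linarith), Real.sqrt_sq (norm_nonneg _)] at this
    calc min ((1 / 2) * Real.sqrt A) lam * ‖x - y‖
        ≤ lam * ‖x - y‖ := by
          apply mul_le_mul_of_nonneg_right (min_le_right _ _) (norm_nonneg _)
      _ ≤ lam * 2 := by nlinarith
      _ ≤ ‖S x - S y‖ := by linarith
  · -- no opposite saturation: use frame bound at midpoint
    push_neg at hcase
    set m : EuclideanSpace ℝ (Fin n) := (2 : ℝ)⁻¹ • (x + y) with hm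
    have hminner : ∀ i, ⟪m, φ i⟫ = (2 : ℝ)⁻¹ * (⟪x, φ i⟫ + ⟪y, φ i⟫) := by
      intro i; rw [hm, real_inner_smul_left, inner_add_left]
    have hmB : m ∈ Metric.closedBall (0 : EuclideanSpace ℝ (Fin n)) 1 := by
      rw [Metric.mem_closedBall, dist_zero_right, hm, norm_smul]
      have : ‖x + y‖ ≤ 2 := by
        calc ‖x + y‖ ≤ ‖x‖ + ‖y‖ := norm_add_le x y
        _ ≤ 2 := by linarith
      rw [norm_inv, Real.norm_ofNat]
      linarith
    have key : ∀ i ∈ univ.filter (fun i : ι => |⟪m, φ i⟫| ≤ lam),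
        (⟪x - y, φ i⟫ / 2) ^ 2 ≤ ((S x - S y) i) ^ 2 := by
      intro i hi
      rw [mem_filter] at hi
      have hmid : |⟪x, φ i⟫ + ⟪y, φ i⟫| ≤ 2 * lam := by
        have := hi.2
        rw [hminner i, abs_mul, abs_inv] at this
        rw [abs_of_nonneg (by norm_num : (0:ℝ) ≤ (2:ℝ))] at this
        linarith
      have hcl := clamp_lower lam ⟪x, φ i⟫ ⟪y, φ i⟫ hmid
        (fun h => absurd h.2 (not_lt.2 ((hcase i).1 h.1)))
        (fun h => absurd h.2 (not_lt.2 ((hcase i).2 h.1)))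
      rw [← hcomp i] at hcl
      have hsub : ⟪x - y, φ i⟫ = ⟪x, φ i⟫ - ⟪y, φ i⟫ := inner_sub_left x y (φ i)
      have h1 : |⟪x - y, φ i⟫ / 2| ≤ |(S x - S y) i| := by
        rw [hsub, abs_div, abs_of_nonneg (by norm_num : (0:ℝ) ≤ (2:ℝ))]
        exact hcl
      calc (⟪x - y, φ i⟫ / 2) ^ 2 = |⟪x - y, φ i⟫ / 2| ^ 2 := (sq_abs _).symm
        _ ≤ |(S x - S y) i| ^ 2 := by
            apply pow_le_pow_left₀ (abs_nonneg _) h1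
        _ = ((S x - S y) i) ^ 2 := sq_abs _
    have hsum : A / 4 * ‖x - y‖ ^ 2 ≤ ‖S x - S y‖ ^ 2 := by
      have hlowm := hlow m hmB (x - y)
      calc A / 4 * ‖x - y‖ ^ 2 = (1/4) * (A * ‖x - y‖ ^ 2) := by ring
        _ ≤ (1/4) * ∑ i ∈ univ.filter (fun i : ι => |⟪m, φ i⟫| ≤ lam), ⟪x - y, φ i⟫ ^ 2 := by
            linarith
        _ = ∑ i ∈ univ.filter (fun i : ι => |⟪m, φ i⟫| ≤ lam), (⟪x - y, φ i⟫ / 2) ^ 2 := by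
            rw [Finset.mul_sum]; apply Finset.sum_congr rfl; intro i _; ring
        _ ≤ ∑ i ∈ univ.filter (fun i : ι => |⟪m, φ i⟫| ≤ lam), ((S x - S y) i) ^ 2 :=
            Finset.sum_le_sum key
        _ ≤ ∑ i, ((S x - S y) i) ^ 2 :=
            Finset.sum_le_sum_of_subset_of_nonneg (Finset.filter_subset _ _)
              (fun i _ _ => sq_nonneg _)
        _ = ‖S x - S y‖ ^ 2 := hnormsq.symm
    have hsq : ((1 / 2) * Real.sqrt A * ‖x - y‖) ^ 2 ≤ ‖S x - S y‖ ^ 2 := by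
      have : ((1 / 2) * Real.sqrt A * ‖x - y‖) ^ 2 = A / 4 * ‖x - y‖ ^ 2 := by
        rw [mul_pow, mul_pow, Real.sq_sqrt hA]; ring
      rw [this]; exact hsum
    have hfin : (1 / 2) * Real.sqrt A * ‖x - y‖ ≤ ‖S x - S y‖ := by
      have := Real.sqrt_le_sqrt hsq
      rwa [Real.sqrt_sq (by positivity), Real.sqrt_sq (norm_nonneg _)] at this
    calc min ((1 / 2) * Real.sqrt A) lam * ‖x - y‖
        ≤ (1 / 2) * Real.sqrt A * ‖x - y‖ :=
          mul_le_mul_of_nonneg_right (min_le_left _ _) (norm_nonneg _)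
      _ ≤ ‖S x - S y‖ := hfin
end

section
/- Let (φ_i)_{i∈I} be a finite frame for ℝ^n and let λ > 0 be such that the saturated measurement operator S_λ is one-to-one on the closed unit ball B of ℝ^n. If κ ≥ 0 satisfies κ‖x−y‖ ≤ ‖S_λ(x) − S_λ(y)‖ for all x, y ∈ B (i.e., κ is a lower Lipschitz bound for S_λ on B), then for every x ∈ B and every z ∈ ℝ^n one has κ²‖z‖² ≤ Σ_{i∈I_λ(x)} |⟨z,φ_i⟩|²; that is, κ² is a lower frame bound of every unsaturated collection. -/
open RealInnerProductSpace Finset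

set_option maxHeartbeats 1000000

lemma sig_eq_clamp (lam : ℝ) (hlam : 0 < lam) (u : ℝ) :
    Real.sign u * min |u| lam = max (-lam) (min u lam) := by
  rcases lt_trichotomy u 0 with h | h | h
  · rw [Real.sign_of_neg h, abs_of_neg h, neg_one_mul,
      min_eq_left (le_of_lt (h.trans hlam))]
    rcases le_total (-u) lam with h2 | h2
    · rw [min_eq_left h2, max_eq_right (by linarith), neg_neg]
    · rw [min_eq_right h2, max_eq_left (by linarith)]
  · simp [h, le_of_lt hlam]
  · rw [Real.sign_of_pos h, abs_of_pos h, one_mul, max_eq_right]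
    exact le_min (neg_nonpos.mpr hlam.le |>.trans h.le) (neg_nonpos.mpr hlam.le |>.trans hlam.le)

lemma clamp_lip (lam u v : ℝ) :
    |max (-lam) (min u lam) - max (-lam) (min v lam)| ≤ |u - v| := by
  rw [max_comm (-lam) (min u lam), max_comm (-lam) (min v lam)]
  calc |max (min u lam) (-lam) - max (min v lam) (-lam)| ≤ |min u lam - min v lam| :=
        abs_max_sub_max_le_abs _ _ _
    _ ≤ max |u - v| |lam - lam| := abs_min_sub_min_le_max _ _ _ _
    _ = |u - v| := by simp

/-- If `κ` is a lower Lipschitz bound on the closed unit ball for an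
injective saturated measurement operator `S_λ` associated with a finite frame, then
`κ²` is a lower frame bound of every unsaturated collection `(φ_i)_{i ∈ I_λ(x)}`. -/
theorem saturation_lower_lipschitz_gives_frame_bound
    {n : ℕ} {ι : Type*} [Fintype ι]
    (φ : ι → EuclideanSpace ℝ (Fin n)) (lam : ℝ) (hlam : 0 < lam)
    (hframe : Submodule.span ℝ (Set.range φ) = ⊤)
    (S : EuclideanSpace ℝ (Fin n) → EuclideanSpace ℝ ι)
    (hS : ∀ x, S x = fun i : ι => Real.sign ⟪x, φ i⟫ * min |⟪x, φ i⟫| lam)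
    (hinj : Set.InjOn S (Metric.closedBall (0 : EuclideanSpace ℝ (Fin n)) 1))
    (κ : ℝ) (hκ : 0 ≤ κ)
    (hlip : ∀ x ∈ Metric.closedBall (0 : EuclideanSpace ℝ (Fin n)) 1,
      ∀ y ∈ Metric.closedBall (0 : EuclideanSpace ℝ (Fin n)) 1,
        κ * ‖x - y‖ ≤ ‖S x - S y‖) :
    ∀ x ∈ Metric.closedBall (0 : EuclideanSpace ℝ (Fin n)) 1,
      ∀ z : EuclideanSpace ℝ (Fin n),
        κ ^ 2 * ‖z‖ ^ 2 ≤
          ∑ i ∈ univ.filter (fun i : ι => |⟪x, φ i⟫| ≤ lam), ⟪z, φ i⟫ ^ 2 := by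
  intro x hx z
  rw [Metric.mem_closedBall, dist_zero_right] at hx
  set c : ι → ℝ := fun i => ⟪x, φ i⟫ with hc
  set d : ι → ℝ := fun i => ⟪z, φ i⟫ with hd
  set T : Finset ι := univ.filter (fun i => lam < |c i|) with hT
  -- slack for saturated indices
  set ε : ℝ := if h : T.Nonempty then T.inf' h (fun i => |c i| - lam) else 1 with hε
  have hεpos : 0 < ε := by
    rw [hε]
    split_ifs with h
    · rw [Finset.lt_inf'_iff]
      intro i hi
      rw [hT, mem_filter] at hi
      linarith [hi.2]
    · norm_num
  have hεle : ∀ i ∈ T, ε ≤ |c i| - lam := by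
    intro i hi
    rw [hε, dif_pos ⟨i, hi⟩]
    exact Finset.inf'_le _ hi
  -- choose scale
  set K : ℝ := 1 + ‖z‖ + ∑ i, (‖z‖ * |c i| + |d i|) with hK
  have hsum_nonneg : (0:ℝ) ≤ ∑ i, (‖z‖ * |c i| + |d i|) :=
    Finset.sum_nonneg fun i _ => by positivity
  have hKpos : 0 < K := by rw [hK]; positivity
  have hKge : ∀ i : ι, ‖z‖ * |c i| + |d i| ≤ K := by
    intro i
    have := Finset.single_le_sum (f := fun i => ‖z‖ * |c i| + |d i|)
      (fun j _ => by positivity) (mem_univ i)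
    rw [hK]; linarith [norm_nonneg z]
  set t : ℝ := min ε 1 / K with ht
  have htpos : 0 < t := by rw [ht]; positivity
  have htK : t * K ≤ min ε 1 := by
    rw [ht, div_mul_cancel₀ _ (ne_of_gt hKpos)]
  have htKε : t * K ≤ ε := htK.trans (min_le_left _ _)
  have htK1 : t * K ≤ 1 := htK.trans (min_le_right _ _)
  set s : ℝ := t * ‖z‖ with hs
  have hs_nonneg : 0 ≤ s := by rw [hs]; positivity
  have hs_le_one : s ≤ 1 := by
    have : s ≤ t * K := by
      rw [hs, hK]; nlinarith
    linarith
  -- key per-index smallness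
  have hkey : ∀ i : ι, s * |c i| + t * |d i| ≤ t * K := by
    intro i
    have := hKge i
    rw [hs]
    nlinarith
  set a : EuclideanSpace ℝ (Fin n) := (1 - s) • x with ha
  set b : EuclideanSpace ℝ (Fin n) := (1 - s) • x + t • z with hb
  have ha_mem : a ∈ Metric.closedBall (0 : EuclideanSpace ℝ (Fin n)) 1 := by
    rw [Metric.mem_closedBall, dist_zero_right, ha, norm_smul, Real.norm_eq_abs,
      abs_of_nonneg (by linarith)]
    nlinarith [norm_nonneg x]
  have hb_mem : b ∈ Metric.closedBall (0 : EuclideanSpace ℝ (Fin n)) 1 := by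
    rw [Metric.mem_closedBall, dist_zero_right, hb]
    calc ‖(1 - s) • x + t • z‖ ≤ ‖(1 - s) • x‖ + ‖t • z‖ := norm_add_le _ _
      _ ≤ (1 - s) + s := by
          rw [norm_smul, norm_smul, Real.norm_eq_abs, Real.norm_eq_abs,
            abs_of_nonneg (by linarith), abs_of_nonneg htpos.le]
          have h1 : (1 - s) * ‖x‖ ≤ 1 - s := by nlinarith [norm_nonneg x]
          linarith [hs.le]
      _ = 1 := by ring
  have hca : ∀ i, ⟪a, φ i⟫ = (1 - s) * c i := fun i => by
    rw [ha, real_inner_smul_left]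
  have hcb : ∀ i, ⟪b, φ i⟫ = (1 - s) * c i + t * d i := fun i => by
    rw [hb, inner_add_left, real_inner_smul_left, real_inner_smul_left]
  -- saturated indices give equal outputs
  have hsat : ∀ i ∈ T, S a i - S b i = 0 := by
    intro i hi
    have hi' : lam < |c i| := by rw [hT, mem_filter] at hi; exact hi.2
    have hεi : ε ≤ |c i| - lam := hεle i hi
    have hsmall : s * |c i| + t * |d i| ≤ |c i| - lam := le_trans (hkey i) (htKε.trans hεi)
    have habs : ∀ u : EuclideanSpace ℝ (Fin n),
        S u i = max (-lam) (min ⟪u, φ i⟫ lam) := by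
      intro u; rw [hS u]; exact sig_eq_clamp lam hlam _
    rw [habs a, habs b, hca i, hcb i]
    rcases abs_cases (c i) with ⟨hce, hcpos⟩ | ⟨hce, hcneg⟩
    · -- c i > lam > 0
      have h1 : lam ≤ (1 - s) * c i := by
        rw [hce] at hsmall hi'
        nlinarith [abs_nonneg (d i), htpos.le]
      have h2 : lam ≤ (1 - s) * c i + t * d i := by
        rw [hce] at hsmall hi'
        nlinarith [abs_nonneg (d i), neg_abs_le (d i), htpos.le]
      rw [min_eq_right h1, min_eq_right h2]
      ring
    · -- c i < -lam
      have h1 : (1 - s) * c i ≤ -lam := by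
        rw [hce] at hsmall hi'
        nlinarith [abs_nonneg (d i), htpos.le]
      have h2 : (1 - s) * c i + t * d i ≤ -lam := by
        rw [hce] at hsmall hi'
        nlinarith [le_abs_self (d i), htpos.le]
      have hlam' : (-lam : ℝ) ≤ lam := by linarith
      rw [min_eq_left (h1.trans hlam'), min_eq_left (h2.trans hlam'),
        max_eq_left h1, max_eq_left h2]
      ring
  -- per-index Lipschitz bound
  have hlipS : ∀ i : ι, (S a i - S b i) ^ 2 ≤ (t * d i) ^ 2 := by
    intro i
    have habs : ∀ u : EuclideanSpace ℝ (Fin n),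
        S u i = max (-lam) (min ⟪u, φ i⟫ lam) := by
      intro u; rw [hS u]; exact sig_eq_clamp lam hlam _
    have := clamp_lip lam (⟪a, φ i⟫) (⟪b, φ i⟫)
    rw [← habs a, ← habs b] at this
    have hdiff : ⟪a, φ i⟫ - ⟪b, φ i⟫ = -(t * d i) := by
      rw [hca i, hcb i]; ring
    rw [hdiff, abs_neg] at this
    calc (S a i - S b i) ^ 2 = |S a i - S b i| ^ 2 := (sq_abs _).symm
      _ ≤ |t * d i| ^ 2 := by
          apply pow_le_pow_left₀ (abs_nonneg _) this
      _ = (t * d i) ^ 2 := sq_abs _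
  -- norm squared of output difference
  set A : ℝ := ∑ i ∈ univ.filter (fun i : ι => |c i| ≤ lam), d i ^ 2 with hA
  have hnorm_sq : ‖S a - S b‖ ^ 2 ≤ t ^ 2 * A := by
    have h1 : ‖S a - S b‖ ^ 2 = ∑ i, (S a i - S b i) ^ 2 := by
      rw [EuclideanSpace.norm_eq, Real.sq_sqrt (Finset.sum_nonneg fun i _ => by positivity)]
      refine Finset.sum_congr rfl fun i _ => ?_
      rw [PiLp.sub_apply, Real.norm_eq_abs, sq_abs]
    rw [h1, ← Finset.sum_filter_add_sum_filter_not univ (fun i => |c i| ≤ lam)]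
    have h2 : ∑ i ∈ univ.filter (fun i => ¬ |c i| ≤ lam), (S a i - S b i) ^ 2 = 0 := by
      apply Finset.sum_eq_zero
      intro i hi
      rw [mem_filter] at hi
      rw [hsat i (by rw [hT, mem_filter]; exact ⟨mem_univ i, lt_of_not_ge hi.2⟩)]
      ring
    rw [h2, add_zero, hA, Finset.mul_sum]
    refine Finset.sum_le_sum fun i hi => ?_
    calc (S a i - S b i) ^ 2 ≤ (t * d i) ^ 2 := hlipS i
      _ = t ^ 2 * d i ^ 2 := by ring
  -- apply lower Lipschitz bound
  have hmain := hlip a ha_mem b hb_mem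
  have hab : ‖a - b‖ = t * ‖z‖ := by
    have : a - b = -(t • z) := by rw [ha, hb]; abel
    rw [this, norm_neg, norm_smul, Real.norm_eq_abs, abs_of_nonneg htpos.le]
  rw [hab] at hmain
  have hAnn : 0 ≤ A := Finset.sum_nonneg fun i _ => sq_nonneg _
  have hsq : (κ * (t * ‖z‖)) ^ 2 ≤ ‖S a - S b‖ ^ 2 := by
    apply pow_le_pow_left₀ (by positivity) hmain
  have hfin : κ ^ 2 * ‖z‖ ^ 2 * t ^ 2 ≤ t ^ 2 * A := by
    calc κ ^ 2 * ‖z‖ ^ 2 * t ^ 2 = (κ * (t * ‖z‖)) ^ 2 := by ring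
      _ ≤ ‖S a - S b‖ ^ 2 := hsq
      _ ≤ t ^ 2 * A := hnorm_sq
  have ht2 : 0 < t ^ 2 := by positivity
  have : κ ^ 2 * ‖z‖ ^ 2 ≤ A := by nlinarith
  rw [hA] at this
  exact this
end

section
/- Let (φ_i)_{i=1}^{n+1} be a frame for ℝ^n consisting of exactly n+1 vectors and let λ > 0 be such that the saturated measurement operator S_λ is one-to-one on the closed unit ball B of ℝ^n. If A ≥ 0 satisfies A‖z‖² ≤ Σ_{i∈I_λ(x)} |⟨z,φ_i⟩|² for every x ∈ B and every z ∈ ℝ^n, then for all x, y ∈ B one has (1/4)·A·‖x−y‖² ≤ ‖S_λ(x) − S_λ(y)‖². -/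
open RealInnerProductSpace Finset

lemma clamp_eq (lam a : ℝ) (hlam : 0 < lam) :
    Real.sign a * min |a| lam = max (-lam) (min a lam) := by
  rcases lt_trichotomy a 0 with h | h | h
  · rw [Real.sign_of_neg h, abs_of_neg h]
    rcases le_total (-a) lam with h2 | h2
    · rw [min_eq_left h2, min_eq_left (by linarith), max_eq_right (by linarith)]; ring
    · rw [min_eq_right h2, min_eq_left (by linarith), max_eq_left (by linarith)]; ring
  · simp [h, Real.sign_zero, hlam.le]
  · rw [Real.sign_of_pos h, abs_of_pos h, one_mul, max_eq_right]
    exact le_min (by linarith) (by linarith)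

lemma key_scalar (lam a b : ℝ) (hlam : 0 < lam) (hmid : |a + b| ≤ 2 * lam)
    (h1 : ¬(lam < a ∧ b < -lam)) (h2 : ¬(lam < b ∧ a < -lam)) :
    ((a - b) / 2) ^ 2 ≤ (Real.sign a * min |a| lam - Real.sign b * min |b| lam) ^ 2 := by
  rw [clamp_eq lam a hlam, clamp_eq lam b hlam]
  rw [abs_le] at hmid
  have h1' : a ≤ lam ∨ -lam ≤ b := by
    rcases not_and_or.mp h1 with h | h
    · exact Or.inl (not_lt.mp h)
    · exact Or.inr (not_lt.mp h)
  have h2' : b ≤ lam ∨ -lam ≤ a := by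
    rcases not_and_or.mp h2 with h | h
    · exact Or.inl (not_lt.mp h)
    · exact Or.inr (not_lt.mp h)
  have clow : ∀ t : ℝ, t ≤ -lam → max (-lam) (min t lam) = -lam := fun t ht => by
    rw [min_eq_left (by linarith), max_eq_left (by linarith)]
  have cmid : ∀ t : ℝ, -lam ≤ t → t ≤ lam → max (-lam) (min t lam) = t := fun t h h' => by
    rw [min_eq_left h', max_eq_right h]
  have chigh : ∀ t : ℝ, lam ≤ t → max (-lam) (min t lam) = lam := fun t ht => by
    rw [min_eq_right ht, max_eq_right (by linarith)]
  rcases le_total a (-lam) with ha | ha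
  · rcases le_total b (-lam) with hb | hb
    · rw [clow a ha, clow b hb]; nlinarith
    · rcases le_total b lam with hb' | hb'
      · rw [clow a ha, cmid b hb hb']; nlinarith
      · rw [clow a ha, chigh b hb']
        rcases h2' with h | h <;> nlinarith [hmid.1, hmid.2]
  · rcases le_total a lam with ha' | ha'
    · rcases le_total b (-lam) with hb | hb
      · rw [cmid a ha ha', clow b hb]; nlinarith
      · rcases le_total b lam with hb' | hb'
        · rw [cmid a ha ha', cmid b hb hb']; nlinarith
        · rw [cmid a ha ha', chigh b hb']; nlinarith [hmid.1, hmid.2]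
    · rcases le_total b (-lam) with hb | hb
      · rw [chigh a ha', clow b hb]
        rcases h1' with h | h <;> nlinarith [hmid.1, hmid.2]
      · rcases le_total b lam with hb' | hb'
        · rw [chigh a ha', cmid b hb hb']; nlinarith [hmid.1, hmid.2]
        · rw [chigh a ha', chigh b hb']; nlinarith

lemma unsat_id (lam a : ℝ) (hlam : 0 < lam) (ha : |a| ≤ lam) :
    Real.sign a * min |a| lam = a := by
  rw [clamp_eq lam a hlam]
  rw [abs_le] at ha
  rw [min_eq_left ha.2, max_eq_right ha.1]

lemma euc_norm_sq {n : ℕ} (v : EuclideanSpace ℝ (Fin n)) : ‖v‖ ^ 2 = ∑ i, (v i) ^ 2 := by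
  rw [EuclideanSpace.norm_eq, Real.sq_sqrt (by positivity)]
  simp [Real.norm_eq_abs, sq_abs]

lemma small_kernel {n : ℕ} {ι : Type*} [Fintype ι] (h : Fintype.card ι < n)
    (φ : ι → EuclideanSpace ℝ (Fin n)) :
    ∃ z : EuclideanSpace ℝ (Fin n), z ≠ 0 ∧ ∀ i, ⟪z, φ i⟫ = 0 := by
  set L : EuclideanSpace ℝ (Fin n) →ₗ[ℝ] (ι → ℝ) :=
    LinearMap.pi (fun i => (innerSL ℝ (φ i)).toLinearMap) with hL
  have hk : LinearMap.ker L ≠ ⊥ := by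
    apply LinearMap.ker_ne_bot_of_finrank_lt
    simpa [Module.finrank_pi, finrank_euclideanSpace_fin] using h
  obtain ⟨z, hz, hz0⟩ := Submodule.exists_mem_ne_zero_of_ne_bot hk
  exact ⟨z, hz0, fun i => by
    have := congrFun (LinearMap.mem_ker.mp hz) i
    rw [real_inner_comm]; simpa [L, mul_comm] using this⟩

/-- For a frame of exactly `n+1` vectors in `ℝ^n` whose saturated
measurement operator `S_λ` is one-to-one on the closed unit ball, if `A` is a lower
frame bound of every unsaturated collection, then
`(1/4)·A·‖x−y‖² ≤ ‖S_λ(x) − S_λ(y)‖²` for all `x, y` in the ball. -/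
theorem saturation_lower_bound_n_plus_one
    {n : ℕ}
    (φ : Fin (n + 1) → EuclideanSpace ℝ (Fin n))
    (hframe : Submodule.span ℝ (Set.range φ) = ⊤)
    (lam : ℝ) (hlam : 0 < lam)
    (S : EuclideanSpace ℝ (Fin n) → EuclideanSpace ℝ (Fin (n + 1)))
    (hS : ∀ x, S x = fun i => Real.sign ⟪x, φ i⟫ * min |⟪x, φ i⟫| lam)
    (hinj : Set.InjOn S (Metric.closedBall (0 : EuclideanSpace ℝ (Fin n)) 1))
    (A : ℝ) (hA : 0 ≤ A)
    (hlow : ∀ x ∈ Metric.closedBall (0 : EuclideanSpace ℝ (Fin n)) 1,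
      ∀ z : EuclideanSpace ℝ (Fin n),
        A * ‖z‖ ^ 2 ≤ ∑ i ∈ univ.filter (fun i => |⟪x, φ i⟫| ≤ lam), ⟪z, φ i⟫ ^ 2) :
    ∀ x ∈ Metric.closedBall (0 : EuclideanSpace ℝ (Fin n)) 1,
      ∀ y ∈ Metric.closedBall (0 : EuclideanSpace ℝ (Fin n)) 1,
        (1 / 4) * A * ‖x - y‖ ^ 2 ≤ ‖S x - S y‖ ^ 2 := by
  have hSapp : ∀ u i, S u i = Real.sign ⟪u, φ i⟫ * min |⟪u, φ i⟫| lam := by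
    intro u i; rw [hS]
  rcases hA.eq_or_lt with hA0 | hApos
  · intro x _ y _
    rw [← hA0]
    simpa using sq_nonneg ‖S x - S y‖
  -- With A > 0, at most one index can be saturated at any point of the ball.
  have hcard : ∀ p ∈ Metric.closedBall (0 : EuclideanSpace ℝ (Fin n)) 1,
      ∀ i j : Fin (n + 1), i ≠ j → lam < |⟪p, φ i⟫| → lam < |⟪p, φ j⟫| → False := by
    intro p hp i j hij hi hj
    set U : Finset (Fin (n + 1)) := univ.filter (fun k => |⟪p, φ k⟫| ≤ lam) with hU
    have hUcard : U.card ≤ n - 1 ∨ U.card < n := by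
      right
      have hiU : i ∉ U := by
        simp only [hU, Finset.mem_filter, Finset.mem_univ, true_and]
        exact not_le.mpr hi
      have hjU : j ∉ U := by
        simp only [hU, Finset.mem_filter, Finset.mem_univ, true_and]
        exact not_le.mpr hj
      have hsub : U ⊆ (univ.erase i).erase j := by
        intro k hk
        rcases eq_or_ne k i with rfl | hki
        · exact absurd hk hiU
        rcases eq_or_ne k j with rfl | hkj
        · exact absurd hk hjU
        simp [Finset.mem_erase, hkj, hki]
      have := Finset.card_le_card hsub
      have h2 : ((univ.erase i : Finset (Fin (n+1))).erase j).card = n - 1 := by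
        rw [Finset.card_erase_of_mem (Finset.mem_erase.mpr ⟨hij.symm, Finset.mem_univ j⟩),
          Finset.card_erase_of_mem (Finset.mem_univ i)]
        simp
      omega
    have hUn : U.card < n := by rcases hUcard with h | h; · omega
                                · exact h
    obtain ⟨z, hz0, hz⟩ := small_kernel (by simpa using hUn) (fun k : U => φ k)
    have := hlow p hp z
    have hsum : ∑ k ∈ U, ⟪z, φ k⟫ ^ 2 = 0 := by
      apply Finset.sum_eq_zero
      intro k hk
      rw [hz ⟨k, hk⟩]; ring
    rw [← hU] at this
    rw [hsum] at this
    have : ‖z‖ ^ 2 ≤ 0 := by nlinarith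
    exact hz0 (by simpa using (pow_eq_zero_iff (n := 2) (by norm_num)).mp (le_antisymm this (sq_nonneg _)) )
  intro x hx y hy
  -- key lemma for the "doubly saturated with opposite signs" case
  have key : ∀ x' ∈ Metric.closedBall (0 : EuclideanSpace ℝ (Fin n)) 1,
      ∀ y' ∈ Metric.closedBall (0 : EuclideanSpace ℝ (Fin n)) 1,
      ∀ i : Fin (n + 1), lam < ⟪x', φ i⟫ → ⟪y', φ i⟫ < -lam →
      (1 / 4) * A * ‖x' - y'‖ ^ 2 ≤ ‖S x' - S y'‖ ^ 2 := by
    intro x' hx' y' hy' i hxi hyi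
    have h1 := hlow x' hx' (x' - y')
    have hstep : ∑ j ∈ univ.filter (fun j => |⟪x', φ j⟫| ≤ lam), ⟪x' - y', φ j⟫ ^ 2
        ≤ ‖S x' - S y'‖ ^ 2 := by
      rw [euc_norm_sq]
      have hsub : univ.filter (fun j => |⟪x', φ j⟫| ≤ lam) ⊆ univ := Finset.filter_subset _ _
      refine le_trans (le_of_eq ?_)
        (Finset.sum_le_sum_of_subset_of_nonneg hsub (fun j _ _ => sq_nonneg _))
      apply Finset.sum_congr rfl
      intro j hj
      have hja : |⟪x', φ j⟫| ≤ lam := (Finset.mem_filter.mp hj).2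
      have hji : j ≠ i := by
        intro h; rw [h] at hja
        exact absurd hja (not_le.mpr (lt_of_lt_of_le hxi (le_abs_self _)))
      have hjb : |⟪y', φ j⟫| ≤ lam := by
        by_contra hcon
        exact hcard y' hy' j i hji (not_le.mp hcon)
          (lt_of_lt_of_le (by linarith [neg_abs_le ⟪y', φ i⟫] : lam < -⟪y', φ i⟫)
            (neg_le_abs _))
      have : (S x' - S y') j = ⟪x' - y', φ j⟫ := by
        show S x' j - S y' j = _
        rw [hSapp, hSapp, unsat_id lam _ hlam hja, unsat_id lam _ hlam hjb, inner_sub_left]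
      rw [this]
    have hAx : A * ‖x' - y'‖ ^ 2 ≤ ‖S x' - S y'‖ ^ 2 := le_trans h1 hstep
    nlinarith [sq_nonneg ‖x' - y'‖]
  by_cases hbad : ∃ i, (lam < ⟪x, φ i⟫ ∧ ⟪y, φ i⟫ < -lam) ∨ (lam < ⟪y, φ i⟫ ∧ ⟪x, φ i⟫ < -lam)
  · obtain ⟨i, hi | hi⟩ := hbad
    · exact key x hx y hy i hi.1 hi.2
    · have := key y hy x hx i hi.1 hi.2
      rwa [norm_sub_rev (S y), norm_sub_rev y] at this
  · push_neg at hbad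
    set m : EuclideanSpace ℝ (Fin n) := (2 : ℝ)⁻¹ • (x + y) with hm
    have hmb : m ∈ Metric.closedBall (0 : EuclideanSpace ℝ (Fin n)) 1 := by
      rw [Metric.mem_closedBall, dist_zero_right] at hx hy ⊢
      calc ‖m‖ ≤ ‖(2:ℝ)⁻¹‖ * ‖x + y‖ := by rw [hm, norm_smul]
        _ ≤ (1/2) * (‖x‖ + ‖y‖) := by
            rw [norm_inv]
            gcongr
            · norm_num
            · exact norm_add_le x y
        _ ≤ 1 := by linarith
    have h1 := hlow m hmb (x - y)
    have hstep : ∑ j ∈ univ.filter (fun j => |⟪m, φ j⟫| ≤ lam), ⟪x - y, φ j⟫ ^ 2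
        ≤ 4 * ‖S x - S y‖ ^ 2 := by
      rw [euc_norm_sq, Finset.mul_sum]
      have step1 : ∑ j ∈ univ.filter (fun j => |⟪m, φ j⟫| ≤ lam), ⟪x - y, φ j⟫ ^ 2
          ≤ ∑ j ∈ univ.filter (fun j => |⟪m, φ j⟫| ≤ lam), 4 * ((S x - S y) j) ^ 2 := by
        apply Finset.sum_le_sum
        intro j hj
        have hjm : |⟪m, φ j⟫| ≤ lam := (Finset.mem_filter.mp hj).2
        have hmj : ⟪m, φ j⟫ = (⟪x, φ j⟫ + ⟪y, φ j⟫) / 2 := by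
          rw [hm, real_inner_smul_left, inner_add_left]; ring
        have habs : |⟪x, φ j⟫ + ⟪y, φ j⟫| ≤ 2 * lam := by
          rw [hmj, abs_div] at hjm
          rw [abs_of_pos (by norm_num : (0:ℝ) < 2)] at hjm
          linarith [abs_nonneg (⟪x, φ j⟫ + ⟪y, φ j⟫)]
        have hks := key_scalar lam ⟪x, φ j⟫ ⟪y, φ j⟫ hlam habs
          (fun hc => absurd ((hbad j).1 hc.1) (not_le.mpr hc.2))
          (fun hc => absurd ((hbad j).2 hc.1) (not_le.mpr hc.2))
        have hdiff : (S x - S y) j =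
            Real.sign ⟪x, φ j⟫ * min |⟪x, φ j⟫| lam - Real.sign ⟪y, φ j⟫ * min |⟪y, φ j⟫| lam := by
          show S x j - S y j = _
          rw [hSapp, hSapp]
        rw [hdiff, inner_sub_left]
        nlinarith [hks]
      have step2 : ∑ j ∈ univ.filter (fun j => |⟪m, φ j⟫| ≤ lam), 4 * ((S x - S y) j) ^ 2
          ≤ ∑ j, 4 * ((S x - S y) j) ^ 2 :=
        Finset.sum_le_sum_of_subset_of_nonneg (Finset.filter_subset _ univ)
          (fun j _ _ => by positivity)
      exact le_trans step1 step2
    have h2 := le_trans h1 hstep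
    nlinarith [sq_nonneg ‖x - y‖]
end
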